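/- arXiv:1701.00269 — 7 statements merged into one kernel-verified Lean document; each statement's English description precedes it below -/
import Mathlib

section
/- For all integers r > 3 and k ≥ 3 there exists a constant C = C(r,k) > 0 such that for all integers n ≥ 2 and s ≥ 1, the number f_r(n,k,s) of edge-colored balanced complete (r−1)-partite (r−1)-graphs K_{s:r−1} with vertex set contained in [n] whose extension is C_k-free is at most 2^{C·(s^{r−2}·log n + s^{r−1}·(1 + log s))}. -/
/-- A hypergraph `H` contains a loose `k`-cycle. -/
def HasLooseCycle (k : ℕ) (H : Finset (Finset ℕ)) : Prop :=
  ∃ (e : ZMod k → Finset ℕ) (v : ZMod k → ℕ),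
    Function.Injective e ∧ Function.Injective v ∧
    (∀ i, e i ∈ H) ∧
    (∀ i, e i ∩ e (i + 1) = ({v i} : Finset ℕ)) ∧
    (∀ i j, j ≠ i → j ≠ i + 1 → i ≠ j + 1 → e i ∩ e j = ∅)

/-- The edge set of the complete `m`-partite `m`-graph with parts `P 0, …, P (m-1)`:
all `m`-element subsets of the union of the parts meeting each part in exactly one
vertex. -/
def completeMultipartiteEdges (m : ℕ) (P : Fin m → Finset ℕ) : Finset (Finset ℕ) :=
  ((Finset.univ.biUnion P).powersetCard m).filter fun T => ∀ i, (T ∩ P i).card = 1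

/-- The extension of an edge-colored hypergraph: each edge `e` becomes `e ∪ {χ e}`. -/
def Extension (G : Finset (Finset ℕ)) (χ : Finset ℕ → ℕ) : Finset (Finset ℕ) :=
  G.image fun e => insert (χ e) e

open Finset

attribute [local instance] Classical.propDecidable

namespace LCAux

variable {m s k : ℕ} {P : Fin m → Finset ℕ}

/-- union of the parts -/
def EV (P : Fin m → Finset ℕ) : Finset ℕ := Finset.univ.biUnion P

/-- the unique vertex of `e` in part `i` -/
noncomputable def pick (P : Fin m → Finset ℕ) (e : Finset ℕ) (i : Fin m) : ℕ :=
  if h : (e ∩ P i).Nonempty then (e ∩ P i).min' h else 0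

lemma mem_K {e : Finset ℕ} (he : e ∈ completeMultipartiteEdges m P) :
    e ⊆ EV P ∧ e.card = m ∧ ∀ i, (e ∩ P i).card = 1 := by
  simp only [completeMultipartiteEdges, Finset.mem_filter, Finset.mem_powersetCard, EV] at he ⊢
  tauto

lemma inter_eq_pick {e : Finset ℕ} (he : e ∈ completeMultipartiteEdges m P) (i : Fin m) :
    e ∩ P i = {pick P e i} := by
  have h1 := (mem_K he).2.2 i
  have hne : (e ∩ P i).Nonempty := Finset.card_pos.1 (by rw [h1]; norm_num)
  have hp : pick P e i ∈ e ∩ P i := by rw [pick, dif_pos hne]; exact Finset.min'_mem _ _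
  refine Finset.eq_singleton_iff_unique_mem.2 ⟨hp, ?_⟩
  intro b hb
  exact Finset.card_le_one.1 (le_of_eq h1) b hb _ hp

lemma pick_eq {e : Finset ℕ} (he : e ∈ completeMultipartiteEdges m P) {i : Fin m} {x : ℕ}
    (hx : x ∈ e) (hxp : x ∈ P i) : pick P e i = x := by
  have := inter_eq_pick he i
  have hmem : x ∈ e ∩ P i := Finset.mem_inter.2 ⟨hx, hxp⟩
  rw [this, Finset.mem_singleton] at hmem
  exact hmem.symm

lemma eq_image_pick {e : Finset ℕ} (he : e ∈ completeMultipartiteEdges m P) :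
    e = Finset.univ.image (pick P e) := by
  apply Finset.Subset.antisymm
  · intro x hx
    have hxV : x ∈ EV P := (mem_K he).1 hx
    obtain ⟨i, -, hi⟩ := Finset.mem_biUnion.1 hxV
    exact Finset.mem_image.2 ⟨i, Finset.mem_univ i, pick_eq he hx hi⟩
  · intro x hx
    obtain ⟨i, -, rfl⟩ := Finset.mem_image.1 hx
    have := inter_eq_pick he i
    have : pick P e i ∈ e ∩ P i := by rw [this]; exact mem_singleton_self _
    exact (Finset.mem_inter.1 this).1

lemma card_EV (hcard : ∀ i, (P i).card = s) : (EV P).card ≤ m * s := by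
  refine le_trans (Finset.card_biUnion_le) ?_
  simp [hcard, Finset.sum_const, Finset.card_univ]

/-- counting edges through a fixed partial transversal-like injection bound -/
lemma card_K (hcard : ∀ i, (P i).card = s) : (completeMultipartiteEdges m P).card ≤ s ^ m := by
  classical
  have h := Finset.card_le_card_of_injOn
    (f := fun e => fun i (_ : i ∈ (Finset.univ : Finset (Fin m))) => pick P e i)
    (s := completeMultipartiteEdges m P)
    (t := Finset.univ.pi (fun i => P i)) ?_ ?_
  · refine h.trans ?_
    rw [Finset.card_pi]
    simp [hcard, Finset.prod_const, Finset.card_univ]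
  · intro e he
    rw [Finset.mem_coe, Finset.mem_pi]
    intro i _
    have h1 := inter_eq_pick he i
    have : pick P e i ∈ e ∩ P i := by rw [h1]; exact mem_singleton_self _
    exact (Finset.mem_inter.1 this).2
  · intro e he e' he' hfe
    rw [eq_image_pick he, eq_image_pick he']
    congr 1
    funext i
    exact congrFun (congrFun hfe i) (Finset.mem_univ i)

/-- triple degree bound -/
lemma card_triple (hcard : ∀ i, (P i).card = s) {u v w : ℕ}
    (huv : u ≠ v) (huw : u ≠ w) (hvw : v ≠ w) :
    ((completeMultipartiteEdges m P).filter fun e => u ∈ e ∧ v ∈ e ∧ w ∈ e).card ≤ s ^ (m - 3) := by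
  classical
  set A := (completeMultipartiteEdges m P).filter fun e => u ∈ e ∧ v ∈ e ∧ w ∈ e with hA
  rcases Finset.eq_empty_or_nonempty A with h | hne
  · simp [h]
  obtain ⟨e0, he0⟩ := hne
  have he0' := Finset.mem_filter.1 he0
  have he0K := he0'.1
  have hu0 := he0'.2.1
  have hv0 := he0'.2.2.1
  have hw0 := he0'.2.2.2
  have hVs := (mem_K he0K).1
  obtain ⟨iu, -, hiu⟩ := Finset.mem_biUnion.1 (hVs hu0)
  obtain ⟨iv, -, hiv⟩ := Finset.mem_biUnion.1 (hVs hv0)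
  obtain ⟨iw, -, hiw⟩ := Finset.mem_biUnion.1 (hVs hw0)
  -- distinct vertices in an edge of K lie in distinct parts
  have key : ∀ e ∈ A, pick P e iu = u ∧ pick P e iv = v ∧ pick P e iw = w := by
    intro e he
    have he' := Finset.mem_filter.1 he
    exact ⟨pick_eq he'.1 he'.2.1 hiu, pick_eq he'.1 he'.2.2.1 hiv, pick_eq he'.1 he'.2.2.2 hiw⟩
  have hne_uv : iu ≠ iv := by
    rintro rfl
    obtain ⟨h1, h2, -⟩ := key e0 he0
    exact huv (h1 ▸ h2 ▸ rfl)
  have hne_uw : iu ≠ iw := by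
    rintro rfl
    obtain ⟨h1, -, h3⟩ := key e0 he0
    exact huw (h1 ▸ h3 ▸ rfl)
  have hne_vw : iv ≠ iw := by
    rintro rfl
    obtain ⟨-, h2, h3⟩ := key e0 he0
    exact hvw (h2 ▸ h3 ▸ rfl)
  set J : Finset (Fin m) := Finset.univ \ {iu, iv, iw} with hJ
  have h := Finset.card_le_card_of_injOn
    (f := fun e => fun i (_ : i ∈ J) => pick P e i)
    (s := A) (t := J.pi (fun i => P i)) ?_ ?_
  · refine h.trans ?_
    rw [Finset.card_pi]
    have hJcard : J.card = m - 3 := by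
      rw [hJ, Finset.card_sdiff_of_subset (Finset.subset_univ _), Finset.card_univ, Fintype.card_fin]
      congr 1
      rw [Finset.card_insert_of_notMem, Finset.card_insert_of_notMem, Finset.card_singleton]
      · simp [hne_vw]
      · simp [hne_uv, hne_uw]
    apply le_of_eq
    calc ∏ i ∈ J, (P i).card = ∏ _i ∈ J, s := by
          apply Finset.prod_congr rfl; intro i _; exact hcard i
      _ = s ^ J.card := by rw [Finset.prod_const]
      _ = s ^ (m - 3) := by rw [hJcard]
  · intro e he
    rw [Finset.mem_coe, Finset.mem_pi]
    intro i _
    have heK := (Finset.mem_filter.1 he).1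
    have h1 := inter_eq_pick heK i
    have : pick P e i ∈ e ∩ P i := by rw [h1]; exact mem_singleton_self _
    exact (Finset.mem_inter.1 this).2
  · intro e he e' he' hfe
    have heK := (Finset.mem_filter.1 he).1
    have heK' := (Finset.mem_filter.1 he').1
    rw [eq_image_pick heK, eq_image_pick heK']
    congr 1
    funext i
    by_cases hiJ : i ∈ J
    · exact congrFun (congrFun hfe i) hiJ
    · have : i ∈ ({iu, iv, iw} : Finset (Fin m)) := by
        rw [hJ] at hiJ
        simp only [Finset.mem_sdiff, Finset.mem_univ, true_and, not_not] at hiJ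
        exact hiJ
      obtain ⟨k1, k2, k3⟩ := key e he
      obtain ⟨k1', k2', k3'⟩ := key e' he'
      simp only [Finset.mem_insert, Finset.mem_singleton] at this
      rcases this with rfl | rfl | rfl
      · rw [k1, k1']
      · rw [k2, k2']
      · rw [k3, k3']

end LCAux

namespace LCAux

variable {m s k : ℕ} {P : Fin m → Finset ℕ}

def Epair (H : Finset (Finset ℕ)) (u v : ℕ) : Finset (Finset ℕ) :=
  H.filter fun e => u ∈ e ∧ v ∈ e

lemma Epair_comm (H : Finset (Finset ℕ)) (u v : ℕ) : Epair H u v = Epair H v u := by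
  simp only [Epair, and_comm]

lemma Epair_subset (H : Finset (Finset ℕ)) (u v : ℕ) : Epair H u v ⊆ H :=
  Finset.filter_subset _ _

lemma Epair_mono {H H' : Finset (Finset ℕ)} (h : H' ⊆ H) (u v : ℕ) :
    Epair H' u v ⊆ Epair H u v := Finset.filter_subset_filter _ h

lemma mem_Epair {H : Finset (Finset ℕ)} {u v : ℕ} {e : Finset ℕ} :
    e ∈ Epair H u v ↔ e ∈ H ∧ u ∈ e ∧ v ∈ e := Finset.mem_filter

def Rich (H : Finset (Finset ℕ)) (ρ : ℕ) : Prop :=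
  ∀ u v : ℕ, u ≠ v → (Epair H u v).Nonempty → ρ < (Epair H u v).card

def mu (P : Fin m → Finset ℕ) (H : Finset (Finset ℕ)) : ℕ :=
  ((EV P ×ˢ EV P).filter fun q => q.1 ≠ q.2 ∧ (Epair H q.1 q.2).Nonempty).card

lemma mu_le (H : Finset (Finset ℕ)) (hcard : ∀ i, (P i).card = s) :
    mu P H ≤ (m * s) ^ 2 := by
  refine (Finset.card_filter_le _ _).trans ?_
  rw [Finset.card_product]
  calc (EV P).card * (EV P).card ≤ (m * s) * (m * s) :=
        Nat.mul_le_mul (card_EV hcard) (card_EV hcard)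
    _ = (m * s) ^ 2 := by ring

lemma pair_mem_mu {H : Finset (Finset ℕ)} (hHK : H ⊆ completeMultipartiteEdges m P)
    {u v : ℕ} (huv : u ≠ v) (hnon : (Epair H u v).Nonempty) :
    (u, v) ∈ ((EV P ×ˢ EV P).filter fun q => q.1 ≠ q.2 ∧ (Epair H q.1 q.2).Nonempty) := by
  obtain ⟨e, he⟩ := hnon
  have he' := mem_Epair.1 he
  have hVs := (mem_K (hHK he'.1)).1
  exact Finset.mem_filter.2 ⟨Finset.mem_product.2 ⟨hVs he'.2.1, hVs he'.2.2⟩, huv, e, he⟩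

lemma clean (ρ : ℕ) (N : ℕ) :
    ∀ H : Finset (Finset ℕ), H ⊆ completeMultipartiteEdges m P → mu P H ≤ N →
    ∃ H', H' ⊆ H ∧ H.card ≤ H'.card + N * ρ ∧ Rich H' ρ := by
  induction N with
  | zero =>
    intro H hHK hmu
    by_cases hR : Rich H ρ
    · exact ⟨H, Finset.Subset.refl _, by omega, hR⟩
    · exfalso
      rw [Rich] at hR
      push_neg at hR
      obtain ⟨u, v, huv, hnon, -⟩ := hR
      have : 0 < mu P H := Finset.card_pos.2 ⟨(u, v), pair_mem_mu hHK huv hnon⟩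
      omega
  | succ N ih =>
    intro H hHK hmu
    by_cases hR : Rich H ρ
    · exact ⟨H, Finset.Subset.refl _, by omega, hR⟩
    rw [Rich] at hR
    push_neg at hR
    obtain ⟨u, v, huv, hnon, hle⟩ := hR
    set H2 := H \ Epair H u v with hH2
    have hsub2 : H2 ⊆ H := Finset.sdiff_subset
    have hcard2 : H.card ≤ H2.card + ρ := by
      have := Finset.card_sdiff_add_card_eq_card (Epair_subset H u v)
      rw [← hH2] at this
      omega
    have hmu2 : mu P H2 ≤ N := by
      have hlt : mu P H2 < mu P H := by
        apply Finset.card_lt_card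
        rw [Finset.ssubset_iff_of_subset]
        · refine ⟨(u, v), pair_mem_mu hHK huv hnon, ?_⟩
          intro hmem
          obtain ⟨e, he⟩ := (Finset.mem_filter.1 hmem).2.2
          have he' := mem_Epair.1 he
          have : e ∈ Epair H u v := mem_Epair.2 ⟨hsub2 he'.1, he'.2⟩
          exact (Finset.mem_sdiff.1 he'.1).2 this
        · intro q hq
          have hq' := Finset.mem_filter.1 hq
          exact Finset.mem_filter.2 ⟨hq'.1, hq'.2.1, hq'.2.2.mono (Epair_mono hsub2 _ _)⟩
      omega
    obtain ⟨H', h1, h2, h3⟩ := ih H2 (hsub2.trans hHK) hmu2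
    refine ⟨H', h1.trans hsub2, ?_, h3⟩
    have : (N + 1) * ρ = N * ρ + ρ := by ring
    omega

lemma select {H' : Finset (Finset ℕ)} (hH' : H' ⊆ completeMultipartiteEdges m P)
    (hcard : ∀ i, (P i).card = s) {u v : ℕ} (huv : u ≠ v) (Φ : Finset ℕ)
    (hu : u ∉ Φ) (hv : v ∉ Φ) (hdeg : Φ.card * s ^ (m - 3) < (Epair H' u v).card) :
    ∃ e ∈ H', u ∈ e ∧ v ∈ e ∧ ∀ w ∈ Φ, w ∉ e := by
  classical
  set Bad := (Epair H' u v).filter (fun e => ∃ w ∈ Φ, w ∈ e) with hBadDef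
  have hBadsub : Bad ⊆ Φ.biUnion (fun w => (completeMultipartiteEdges m P).filter
      fun e => u ∈ e ∧ v ∈ e ∧ w ∈ e) := by
    intro e he
    have he' := Finset.mem_filter.1 he
    obtain ⟨w, hwΦ, hwe⟩ := he'.2
    have he'' := mem_Epair.1 he'.1
    exact Finset.mem_biUnion.2 ⟨w, hwΦ,
      Finset.mem_filter.2 ⟨hH' he''.1, he''.2.1, he''.2.2, hwe⟩⟩
  have hBadcard : Bad.card ≤ Φ.card * s ^ (m - 3) := by
    refine (Finset.card_le_card hBadsub).trans ?_
    refine (Finset.card_biUnion_le).trans ?_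
    calc ∑ w ∈ Φ, ((completeMultipartiteEdges m P).filter
          fun e => u ∈ e ∧ v ∈ e ∧ w ∈ e).card
        ≤ ∑ _w ∈ Φ, s ^ (m - 3) := by
          apply Finset.sum_le_sum
          intro w hwΦ
          have hwu : u ≠ w := fun h => hu (h ▸ hwΦ)
          have hwv : v ≠ w := fun h => hv (h ▸ hwΦ)
          exact card_triple hcard huv hwu hwv
      _ = Φ.card * s ^ (m - 3) := by rw [Finset.sum_const, smul_eq_mul]
  have hnon : (Epair H' u v \ Bad).Nonempty := by
    apply Finset.card_pos.1
    have hBs : Bad ⊆ Epair H' u v := Finset.filter_subset _ _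
    have := Finset.card_sdiff_add_card_eq_card hBs
    omega
  obtain ⟨e, he⟩ := hnon
  have he' := Finset.mem_sdiff.1 he
  have he'' := mem_Epair.1 he'.1
  refine ⟨e, he''.1, he''.2.1, he''.2.2, ?_⟩
  intro w hwΦ hwe
  exact he'.2 (Finset.mem_filter.2 ⟨he'.1, w, hwΦ, hwe⟩)

end LCAux

namespace LCAux

variable {m s k : ℕ} {P : Fin m → Finset ℕ}

lemma wheel (hm : 3 ≤ m) (hk : 3 ≤ k) (hcard : ∀ i, (P i).card = s)
    {H' : Finset (Finset ℕ)} (hH' : H' ⊆ completeMultipartiteEdges m P)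
    (hrich : Rich H' ((k * (m + 1) + 1) * s ^ (m - 3))) (hne : H'.Nonempty)
    (hs : 1 ≤ s) :
    ∃ u : ℕ → ℕ, (∀ a < k, ∀ b < k, u a = u b → a = b) ∧
      (∀ a < k, (Epair H' (u a) (u ((a + 1) % k))).Nonempty) := by
  classical
  have hspos : 0 < s ^ (m - 3) := Nat.pow_pos (by omega)
  have main : ∀ j, 2 ≤ j → j ≤ k →
      ∃ u : ℕ → ℕ, (∀ a < j, ∀ b < j, u a = u b → a = b) ∧
        (∀ a, a + 1 < j → (Epair H' (u a) (u (a + 1))).Nonempty) ∧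
        (∀ a, 1 ≤ a → a < j → (Epair H' (u 0) (u a)).Nonempty) := by
    intro j hj
    induction j, hj using Nat.le_induction with
    | base =>
      intro _
      obtain ⟨e0, he0⟩ := hne
      have hcard0 : e0.card = m := (mem_K (hH' he0)).2.1
      have h2 : 1 < e0.card := by omega
      obtain ⟨a, ha, b, hb, hab⟩ := Finset.one_lt_card.1 h2
      refine ⟨fun i => if i = 0 then a else b, ?_, ?_, ?_⟩
      · intro x hx y hy hxy
        interval_cases x <;> interval_cases y <;> simp_all
      · intro x hx
        have hx0 : x = 0 := by omega
        subst hx0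
        simp only [if_pos rfl, if_neg one_ne_zero]
        exact ⟨e0, mem_Epair.2 ⟨he0, ha, hb⟩⟩
      · intro x hx1 hx2
        have hx0 : x = 1 := by omega
        subst hx0
        simp only [if_pos rfl, if_neg one_ne_zero]
        exact ⟨e0, mem_Epair.2 ⟨he0, ha, hb⟩⟩
    | succ j hj ih =>
      intro hjk
      obtain ⟨u, hinj, hcons, hstar⟩ := ih (by omega)
      have h0j : u 0 ≠ u (j - 1) := by
        intro h
        have := hinj 0 (by omega) (j - 1) (by omega) h
        omega
      have hpair : (Epair H' (u 0) (u (j - 1))).Nonempty := hstar (j - 1) (by omega) (by omega)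
      have hrichp := hrich _ _ h0j hpair
      set Φ := (Finset.Ico 1 (j - 1)).image u with hΦdef
      have hΦcard : Φ.card ≤ k := by
        refine (Finset.card_image_le).trans ?_
        rw [Nat.card_Ico]
        omega
      have hu0 : u 0 ∉ Φ := by
        intro h
        obtain ⟨a, haI, hau⟩ := Finset.mem_image.1 h
        have haI' := Finset.mem_Ico.1 haI
        have := hinj a (by omega) 0 (by omega) hau
        omega
      have huj : u (j - 1) ∉ Φ := by
        intro h
        obtain ⟨a, haI, hau⟩ := Finset.mem_image.1 h
        have haI' := Finset.mem_Ico.1 haI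
        have := hinj a (by omega) (j - 1) (by omega) hau
        omega
      have hdeg : Φ.card * s ^ (m - 3) < (Epair H' (u 0) (u (j - 1))).card := by
        have h1 : Φ.card * s ^ (m - 3) ≤ k * s ^ (m - 3) :=
          Nat.mul_le_mul_right _ hΦcard
        have h2 : k * s ^ (m - 3) < (k * (m + 1) + 1) * s ^ (m - 3) := by
          have hkk : k < k * (m + 1) + 1 := by
            have : k ≤ k * (m + 1) := Nat.le_mul_of_pos_right k (by omega)
            omega
          exact (Nat.mul_lt_mul_right hspos).2 hkk
        omega
      obtain ⟨g, hgH, hg0, hgj, hgΦ⟩ := select hH' hcard h0j Φ hu0 huj hdeg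
      have hgcard : g.card = m := (mem_K (hH' hgH)).2.1
      set used := (Finset.range j).image u with husedDef
      have hsubint : g ∩ used ⊆ {u 0, u (j - 1)} := by
        intro x hx
        have hx' := Finset.mem_inter.1 hx
        obtain ⟨a, haR, hau⟩ := Finset.mem_image.1 hx'.2
        have haR' := Finset.mem_range.1 haR
        by_cases h0 : a = 0
        · subst h0
          rw [← hau]
          exact Finset.mem_insert_self _ _
        by_cases h1 : a = j - 1
        · subst h1
          rw [← hau]
          exact Finset.mem_insert.2 (Or.inr (Finset.mem_singleton_self _))
        · exfalso
          have : x ∈ Φ := Finset.mem_image.2 ⟨a, Finset.mem_Ico.2 ⟨by omega, by omega⟩, hau⟩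
          exact hgΦ x this hx'.1
      have hnewv : (g \ used).Nonempty := by
        apply Finset.card_pos.1
        have h1 : (g ∩ used).card ≤ 2 := by
          refine (Finset.card_le_card hsubint).trans ?_
          exact (Finset.card_insert_le _ _).trans (by simp)
        have h2 := Finset.card_sdiff_add_card_inter g used
        omega
      obtain ⟨w, hw⟩ := hnewv
      have hw' := Finset.mem_sdiff.1 hw
      refine ⟨Function.update u j w, ?_, ?_, ?_⟩
      · intro a ha b hb hab
        by_cases haj : a = j <;> by_cases hbj : b = j
        · omega
        · exfalso
          subst haj
          rw [Function.update_self, Function.update_of_ne hbj] at hab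
          exact hw'.2 (Finset.mem_image.2 ⟨b, Finset.mem_range.2 (by omega), hab.symm⟩)
        · exfalso
          subst hbj
          rw [Function.update_self, Function.update_of_ne haj] at hab
          exact hw'.2 (Finset.mem_image.2 ⟨a, Finset.mem_range.2 (by omega), hab⟩)
        · rw [Function.update_of_ne haj, Function.update_of_ne hbj] at hab
          exact hinj a (by omega) b (by omega) hab
      · intro a ha
        by_cases haj : a + 1 = j
        · have ha' : a = j - 1 := by omega
          have haj' : a ≠ j := by omega
          rw [haj, Function.update_self, Function.update_of_ne haj', ha']
          exact ⟨g, mem_Epair.2 ⟨hgH, hgj, hw'.1⟩⟩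
        · rw [Function.update_of_ne (by omega : a ≠ j),
            Function.update_of_ne (by omega : a + 1 ≠ j)]
          exact hcons a (by omega)
      · intro a h1a haj1
        by_cases haj : a = j
        · subst haj
          rw [Function.update_self, Function.update_of_ne (by omega : (0:ℕ) ≠ a)]
          exact ⟨g, mem_Epair.2 ⟨hgH, hg0, hw'.1⟩⟩
        · rw [Function.update_of_ne haj, Function.update_of_ne (by omega : (0:ℕ) ≠ j)]
          exact hstar a h1a (by omega)
  obtain ⟨u, hinj, hcons, hstar⟩ := main k (by omega) (le_refl k)
  refine ⟨u, hinj, ?_⟩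
  intro a ha
  by_cases hak : a + 1 < k
  · rw [Nat.mod_eq_of_lt hak]
    exact hcons a hak
  · have hak' : a + 1 = k := by omega
    rw [hak', Nat.mod_self, Epair_comm]
    have ha' : a = k - 1 := by omega
    rw [ha']
    exact hstar (k - 1) (by omega) (by omega)

end LCAux

namespace LCAux

variable {m s k : ℕ} {P : Fin m → Finset ℕ}

lemma mod_succ_lt {a : ℕ} (hk : 0 < k) : (a + 1) % k < k := Nat.mod_lt _ hk

lemma mod_succ_ne {a : ℕ} (hk : 3 ≤ k) (ha : a < k) : (a + 1) % k ≠ a := by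
  by_cases h : a + 1 < k
  · rw [Nat.mod_eq_of_lt h]; omega
  · have : a + 1 = k := by omega
    rw [this, Nat.mod_self]; omega

lemma mod_succ_inj {a b : ℕ} (hk : 3 ≤ k) (ha : a < k) (hb : b < k)
    (h : (a + 1) % k = (b + 1) % k) : a = b := by
  by_cases h1 : a + 1 < k <;> by_cases h2 : b + 1 < k
  · rw [Nat.mod_eq_of_lt h1, Nat.mod_eq_of_lt h2] at h; omega
  · have hb' : b + 1 = k := by omega
    rw [Nat.mod_eq_of_lt h1, hb', Nat.mod_self] at h; omega
  · have ha' : a + 1 = k := by omega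
    rw [ha', Nat.mod_self, Nat.mod_eq_of_lt h2] at h; omega
  · omega

lemma mod_two_ne {a : ℕ} (hk : 3 ≤ k) (ha : a < k) : ((a + 1) % k + 1) % k ≠ a := by
  by_cases h1 : a + 1 < k
  · rw [Nat.mod_eq_of_lt h1]
    by_cases h2 : a + 2 < k
    · have : a + 1 + 1 = a + 2 := by omega
      rw [this, Nat.mod_eq_of_lt h2]; omega
    · have : a + 1 + 1 = k := by omega
      rw [this, Nat.mod_self]; omega
  · have : a + 1 = k := by omega
    rw [this, Nat.mod_self]
    rw [Nat.mod_eq_of_lt (by omega : 0 + 1 < k)]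
    omega

lemma lift_cycle (hm : 3 ≤ m) (hk : 3 ≤ k) (hcard : ∀ i, (P i).card = s) (hs : 1 ≤ s)
    {H' H : Finset (Finset ℕ)} (hH' : H' ⊆ completeMultipartiteEdges m P)
    (hHH : H' ⊆ H)
    (hrich : Rich H' ((k * (m + 1) + 1) * s ^ (m - 3)))
    {u : ℕ → ℕ} (hinj : ∀ a < k, ∀ b < k, u a = u b → a = b)
    (hcyc : ∀ a < k, (Epair H' (u a) (u ((a + 1) % k))).Nonempty) :
    HasLooseCycle k H := by
  classical
  have hkpos : 0 < k := by omega
  have hspos : 0 < s ^ (m - 3) := Nat.pow_pos (by omega)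
  have hune : ∀ a < k, u a ≠ u ((a + 1) % k) := by
    intro a ha h
    exact mod_succ_ne hk ha (hinj ((a + 1) % k) (mod_succ_lt hkpos) a ha h.symm)
  -- build the cycle edges greedily
  have claim : ∀ j ≤ k, ∃ f : ℕ → Finset ℕ,
      (∀ a < j, f a ∈ Epair H' (u a) (u ((a + 1) % k))) ∧
      (∀ a < j, ∀ t < k, u t ∈ f a → t = a ∨ t = (a + 1) % k) ∧
      (∀ a < j, ∀ b < a, ∀ x, x ∈ f a → x ∈ f b →
        x = u a ∨ x = u ((a + 1) % k)) := by
    intro j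
    induction j with
    | zero => exact fun _ => ⟨fun _ => ∅, by omega, by omega, by omega⟩
    | succ j ih =>
      intro hjk
      obtain ⟨f, hC1, hC2, hC3⟩ := ih (by omega)
      have hjk' : j < k := hjk
      have hpairne := hune j hjk'
      have hrichp := hrich _ _ hpairne (hcyc j hjk')
      set pairSet : Finset ℕ := {u j, u ((j + 1) % k)} with hpairSet
      set Φ := (((Finset.range k).image u) ∪ (Finset.range j).biUnion f) \ pairSet with hΦdef
      have hΦcard : Φ.card ≤ k * (m + 1) := by
        refine (Finset.card_le_card Finset.sdiff_subset).trans ?_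
        refine (Finset.card_union_le _ _).trans ?_
        have h1 : ((Finset.range k).image u).card ≤ k := by
          refine (Finset.card_image_le).trans ?_
          simp
        have h2 : ((Finset.range j).biUnion f).card ≤ j * m := by
          refine (Finset.card_biUnion_le).trans ?_
          calc ∑ b ∈ Finset.range j, (f b).card ≤ ∑ _b ∈ Finset.range j, m := by
                apply Finset.sum_le_sum
                intro b hb
                have hfb := hC1 b (Finset.mem_range.1 hb)
                exact le_of_eq (mem_K (hH' (mem_Epair.1 hfb).1)).2.1
            _ = j * m := by rw [Finset.sum_const, smul_eq_mul]; simp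
        have h3 : j * m ≤ k * m := Nat.mul_le_mul_right _ (by omega)
        have : k * (m + 1) = k + k * m := by ring
        omega
      have hΦ1 : u j ∉ Φ := by
        intro h
        exact (Finset.mem_sdiff.1 h).2 (Finset.mem_insert_self _ _)
      have hΦ2 : u ((j + 1) % k) ∉ Φ := by
        intro h
        exact (Finset.mem_sdiff.1 h).2 (Finset.mem_insert.2 (Or.inr (Finset.mem_singleton_self _)))
      have hdeg : Φ.card * s ^ (m - 3) < (Epair H' (u j) (u ((j + 1) % k))).card := by
        have h1 : Φ.card * s ^ (m - 3) ≤ (k * (m + 1)) * s ^ (m - 3) :=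
          Nat.mul_le_mul_right _ hΦcard
        have h2 : (k * (m + 1)) * s ^ (m - 3) < (k * (m + 1) + 1) * s ^ (m - 3) :=
          (Nat.mul_lt_mul_right hspos).2 (by omega)
        omega
      obtain ⟨g, hgH', hgu1, hgu2, hgΦ⟩ := select hH' hcard hpairne Φ hΦ1 hΦ2 hdeg
      refine ⟨Function.update f j g, ?_, ?_, ?_⟩
      · intro a ha
        by_cases haj : a = j
        · subst haj
          rw [Function.update_self]
          exact mem_Epair.2 ⟨hgH', hgu1, hgu2⟩
        · rw [Function.update_of_ne haj]
          exact hC1 a (by omega)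
      · intro a ha t ht hut
        by_cases haj : a = j
        · subst haj
          rw [Function.update_self] at hut
          by_contra hcon
          push_neg at hcon
          have hnp : u t ∉ pairSet := by
            intro hmem
            rw [hpairSet] at hmem
            rcases Finset.mem_insert.1 hmem with h | h
            · exact hcon.1 (hinj t ht a (by omega) h)
            · exact hcon.2 (hinj t ht _ (mod_succ_lt hkpos) (Finset.mem_singleton.1 h))
          have : u t ∈ Φ := by
            rw [hΦdef]
            refine Finset.mem_sdiff.2 ⟨Finset.mem_union.2 (Or.inl ?_), hnp⟩
            exact Finset.mem_image.2 ⟨t, Finset.mem_range.2 ht, rfl⟩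
          exact hgΦ _ this hut
        · rw [Function.update_of_ne haj] at hut
          exact hC2 a (by omega) t ht hut
      · intro a ha b hb x hxa hxb
        by_cases haj : a = j
        · subst haj
          rw [Function.update_self] at hxa
          rw [Function.update_of_ne (by omega : b ≠ a)] at hxb
          by_contra hcon
          push_neg at hcon
          have hnp : x ∉ pairSet := by
            intro hmem
            rw [hpairSet] at hmem
            rcases Finset.mem_insert.1 hmem with h | h
            · exact hcon.1 h
            · exact hcon.2 (Finset.mem_singleton.1 h)
          have : x ∈ Φ := by
            rw [hΦdef]
            refine Finset.mem_sdiff.2 ⟨Finset.mem_union.2 (Or.inr ?_), hnp⟩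
            exact Finset.mem_biUnion.2 ⟨b, Finset.mem_range.2 (by omega), hxb⟩
          exact hgΦ _ this hxa
        · rw [Function.update_of_ne haj] at hxa
          rw [Function.update_of_ne (by omega : b ≠ j)] at hxb
          exact hC3 a (by omega) b hb x hxa hxb
  obtain ⟨f, hC1, hC2, hC3⟩ := claim k (le_refl k)
  -- the master intersection property
  have hD : ∀ a, a < k → ∀ b, b < k → a ≠ b → ∀ x, x ∈ f a → x ∈ f b →
      (x = u a ∨ x = u ((a + 1) % k)) ∧ (x = u b ∨ x = u ((b + 1) % k)) := by
    have half : ∀ a, a < k → ∀ b, b < k → b < a → ∀ x, x ∈ f a → x ∈ f b →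
        (x = u a ∨ x = u ((a + 1) % k)) ∧ (x = u b ∨ x = u ((b + 1) % k)) := by
      intro a ha b hb hba x hxa hxb
      have hA := hC3 a ha b hba x hxa hxb
      refine ⟨hA, ?_⟩
      rcases hA with rfl | rfl
      · rcases hC2 b hb a ha hxb with h' | h'
        · exact Or.inl (by rw [h'])
        · exact Or.inr (by rw [h'])
      · rcases hC2 b hb ((a + 1) % k) (mod_succ_lt hkpos) hxb with h' | h'
        · exact Or.inl (by rw [h'])
        · exact Or.inr (by rw [h'])
    intro a ha b hb hab x hxa hxb
    rcases Nat.lt_or_ge b a with h | h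
    · exact half a ha b hb h x hxa hxb
    · have hba : a < b := by omega
      exact And.comm.1 (half b hb a ha hba x hxb hxa)
  have hfK : ∀ a < k, f a ∈ completeMultipartiteEdges m P := by
    intro a ha
    exact hH' (mem_Epair.1 (hC1 a ha)).1
  have hfcard : ∀ a < k, (f a).card = m := fun a ha => (mem_K (hfK a ha)).2.1
  haveI : NeZero k := ⟨by omega⟩
  haveI : Fact (1 < k) := ⟨by omega⟩
  have hval_lt : ∀ i : ZMod k, i.val < k := fun i => ZMod.val_lt i
  have hval_inj : ∀ i j : ZMod k, i.val = j.val → i = j := fun i j h =>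
    ZMod.val_injective k h
  have hval_add_one : ∀ i : ZMod k, (i + 1).val = (i.val + 1) % k := by
    intro i
    rw [ZMod.val_add, ZMod.val_one]
  refine ⟨fun i => f i.val, fun i => u ((i.val + 1) % k), ?_, ?_, ?_, ?_, ?_⟩
  · -- e injective
    intro i j hij
    by_contra hne
    have hab : i.val ≠ j.val := fun h => hne (hval_inj _ _ h)
    have hsub : f i.val ⊆ insert (u i.val) {u ((i.val + 1) % k)} := by
      intro x hx
      have hij' : f i.val = f j.val := hij
      have hx' : x ∈ f j.val := by rw [← hij']; exact hx
      rcases (hD i.val (hval_lt i) j.val (hval_lt j) hab x hx hx').1 with rfl | rfl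
      · exact Finset.mem_insert_self _ _
      · exact Finset.mem_insert.2 (Or.inr (Finset.mem_singleton_self _))
    have h2 : (f i.val).card ≤ 2 := by
      refine (Finset.card_le_card hsub).trans ?_
      exact (Finset.card_insert_le _ _).trans (by simp)
    have := hfcard i.val (hval_lt i)
    omega
  · -- v injective
    intro i j hij
    apply hval_inj
    apply mod_succ_inj hk (hval_lt i) (hval_lt j)
    exact hinj _ (mod_succ_lt hkpos) _ (mod_succ_lt hkpos) hij
  · intro i
    exact hHH (mem_Epair.1 (hC1 i.val (hval_lt i))).1
  · -- consecutive intersections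
    intro i
    show f i.val ∩ f ((i + 1).val) = {u ((i.val + 1) % k)}
    set a := i.val with hadef
    have ha : a < k := hval_lt i
    have hb : (a + 1) % k < k := mod_succ_lt hkpos
    have hab : (a + 1) % k ≠ a := mod_succ_ne hk ha
    rw [hval_add_one]
    refine Finset.eq_singleton_iff_unique_mem.2 ⟨?_, ?_⟩
    · refine Finset.mem_inter.2 ⟨(mem_Epair.1 (hC1 a ha)).2.2, (mem_Epair.1 (hC1 _ hb)).2.1⟩
    · intro x hx
      have hx' := Finset.mem_inter.1 hx
      have hDx := hD a ha ((a + 1) % k) hb (Ne.symm hab) x hx'.1 hx'.2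
      rcases hDx.1 with rfl | rfl
      · exfalso
        rcases hDx.2 with h | h
        · exact hab (hinj _ hb a ha h.symm)
        · exact mod_two_ne hk ha (hinj _ (mod_succ_lt hkpos) a ha h.symm)
      · rfl
  · -- non-adjacent intersections
    intro i j hji hji1 hij1
    show f i.val ∩ f j.val = ∅
    set a := i.val
    set b := j.val
    have ha : a < k := hval_lt i
    have hb : b < k := hval_lt j
    have hba : b ≠ a := fun h => hji (hval_inj _ _ h)
    have hb1 : b ≠ (a + 1) % k := by
      intro h
      apply hji1
      apply hval_inj
      rw [hval_add_one]
      exact h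
    have ha1 : a ≠ (b + 1) % k := by
      intro h
      apply hij1
      apply hval_inj
      rw [hval_add_one]
      exact h
    apply Finset.eq_empty_iff_forall_notMem.2
    intro x hx
    have hx' := Finset.mem_inter.1 hx
    have hDx := hD a ha b hb (Ne.symm hba) x hx'.1 hx'.2
    rcases hDx.1 with rfl | rfl <;> rcases hDx.2 with h | h
    · exact hba (hinj b hb a ha h.symm)
    · exact ha1 (hinj a ha _ (mod_succ_lt hkpos) h)
    · exact hb1 (hinj _ (mod_succ_lt hkpos) b hb h).symm
    · exact hba (mod_succ_inj hk ha hb (hinj _ (mod_succ_lt hkpos) _ (mod_succ_lt hkpos) h)).symm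

theorem turan_bound (hm : 3 ≤ m) (hk : 3 ≤ k) (hs : 1 ≤ s) (hcard : ∀ i, (P i).card = s)
    {H : Finset (Finset ℕ)} (hHK : H ⊆ completeMultipartiteEdges m P)
    (hno : ¬ HasLooseCycle k H) :
    H.card ≤ (m * s) ^ 2 * ((k * (m + 1) + 1) * s ^ (m - 3)) := by
  obtain ⟨H', hsub, hcount, hrich⟩ :=
    clean ((k * (m + 1) + 1) * s ^ (m - 3)) ((m * s) ^ 2) H hHK (mu_le H hcard)
  rcases Finset.eq_empty_or_nonempty H' with h | hne
  · rw [h] at hcount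
    simpa using hcount
  · exfalso
    obtain ⟨u, hinj, hcyc⟩ := wheel hm hk hcard (hsub.trans hHK) hrich hne hs
    exact hno (lift_cycle hm hk hcard hs (hsub.trans hHK) hsub hrich hinj hcyc)

end LCAux

namespace LCAux

variable {m s k : ℕ} {P : Fin m → Finset ℕ}

lemma colors_bound (hm : 3 ≤ m) (hk : 3 ≤ k) (hs : 1 ≤ s)
    (hcard : ∀ i, (P i).card = s)
    {G : Finset (Finset ℕ)} {χ : Finset ℕ → ℕ}
    (hG : G = completeMultipartiteEdges m P)
    (hno : ¬ HasLooseCycle k (Extension G χ)) :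
    ((G.image χ) \ EV P).card ≤ (m * s) ^ 2 * ((k * (m + 1) + 1) * s ^ (m - 3)) := by
  classical
  set Z := (G.image χ) \ EV P with hZ
  set rep : ℕ → Finset ℕ := fun z => if h : ∃ e ∈ G, χ e = z then h.choose else ∅ with hrepdef
  have hrep_spec : ∀ z ∈ Z, rep z ∈ G ∧ χ (rep z) = z := by
    intro z hz
    have : z ∈ G.image χ := (Finset.mem_sdiff.1 hz).1
    obtain ⟨e, he, hze⟩ := Finset.mem_image.1 this
    have hex : ∃ e ∈ G, χ e = z := ⟨e, he, hze⟩
    rw [hrepdef]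
    simp only [dif_pos hex]
    exact ⟨hex.choose_spec.1, hex.choose_spec.2⟩
  set R := Z.image rep with hR
  have hRG : R ⊆ G := by
    intro e he
    obtain ⟨z, hz, rfl⟩ := Finset.mem_image.1 he
    exact (hrep_spec z hz).1
  have hcardR : R.card = Z.card := by
    apply Finset.card_image_of_injOn
    intro z1 h1 z2 h2 h12
    rw [← (hrep_spec z1 h1).2, ← (hrep_spec z2 h2).2, h12]
  haveI : NeZero k := ⟨by omega⟩
  haveI : Fact (1 < k) := ⟨by omega⟩
  have hRnocyc : ¬ HasLooseCycle k R := by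
    rintro ⟨e, v, heinj, hvinj, hemem, hecons, hedisj⟩
    apply hno
    have hmemG : ∀ i, e i ∈ G := fun i => hRG (hemem i)
    have hcolZ : ∀ i, χ (e i) ∈ Z := by
      intro i
      obtain ⟨z, hz, hze⟩ := Finset.mem_image.1 (hemem i)
      rw [← hze, (hrep_spec z hz).2]
      exact hz
    have hcolV : ∀ i, χ (e i) ∉ EV P := fun i => (Finset.mem_sdiff.1 (hcolZ i)).2
    have hsubV : ∀ i, e i ⊆ EV P := by
      intro i
      have := hmemG i
      rw [hG] at this
      exact (mem_K this).1
    have hback : ∀ i, e i = rep (χ (e i)) := by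
      intro i
      obtain ⟨z, hz, hze⟩ := Finset.mem_image.1 (hemem i)
      have h1 : χ (e i) = z := by rw [← hze]; exact (hrep_spec z hz).2
      rw [h1, hze]
    have hcolinj : ∀ i j, χ (e i) = χ (e j) → i = j := by
      intro i j h
      apply heinj
      rw [hback i, hback j, h]
    have hinter : ∀ i j, i ≠ j →
        insert (χ (e i)) (e i) ∩ insert (χ (e j)) (e j) = e i ∩ e j := by
      intro i j hij
      ext x
      simp only [Finset.mem_inter, Finset.mem_insert]
      constructor
      · rintro ⟨h1 | h1, h2 | h2⟩
        · exact absurd (hcolinj i j (by rw [← h1, ← h2])) hij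
        · exact absurd (hsubV j (h1 ▸ h2)) (hcolV i)
        · exact absurd (hsubV i (h2 ▸ h1)) (hcolV j)
        · exact ⟨h1, h2⟩
      · rintro ⟨h1, h2⟩
        exact ⟨Or.inr h1, Or.inr h2⟩
    refine ⟨fun i => insert (χ (e i)) (e i), v, ?_, hvinj, ?_, ?_, ?_⟩
    · intro i j hij
      by_contra hne
      have hmem : χ (e i) ∈ insert (χ (e j)) (e j) := by
        have hij' : insert (χ (e i)) (e i) = insert (χ (e j)) (e j) := hij
        rw [← hij']
        exact Finset.mem_insert_self _ _
      rcases Finset.mem_insert.1 hmem with h | h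
      · exact hne (hcolinj i j h)
      · exact (hcolV i) (hsubV j h)
    · intro i
      show insert (χ (e i)) (e i) ∈ Extension (G) χ
      rw [Extension]
      exact Finset.mem_image_of_mem _ (hmemG i)
    · intro i
      have hne : i ≠ i + 1 := by
        intro h
        exact one_ne_zero (left_eq_add.1 h)
      show insert (χ (e i)) (e i) ∩ insert (χ (e (i + 1))) (e (i + 1)) = {v i}
      rw [hinter i (i + 1) hne]
      exact hecons i
    · intro i j h1 h2 h3
      have hij : i ≠ j := fun h => h1 h.symm
      show insert (χ (e i)) (e i) ∩ insert (χ (e j)) (e j) = ∅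
      rw [hinter i j hij]
      exact hedisj i j h1 h2 h3
  have hRK : R ⊆ completeMultipartiteEdges m P := by
    rw [← hG]
    exact hRG
  have := turan_bound hm hk hs hcard hRK hRnocyc
  omega

end LCAux

namespace LCAux

/-- max number of outside colors -/
def MM (m s k : ℕ) : ℕ := (m * s) ^ 2 * ((k * (m + 1) + 1) * s ^ (m - 3))

noncomputable def Ppool (m n s : ℕ) : Finset (Fin m → Finset ℕ) :=
  Fintype.piFinset (fun _ : Fin m => (Finset.Icc 1 n).powersetCard s)

noncomputable def Zpool (n M : ℕ) : Finset (Finset ℕ) :=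
  (Finset.Icc 1 n).powerset.filter (fun Z => Z.card ≤ M)

noncomputable def FunF (m : ℕ) (Pp : Fin m → Finset ℕ) (Z : Finset ℕ) :
    Finset (Finset ℕ → ℕ) :=
  ((completeMultipartiteEdges m Pp).pi (fun _ => EV Pp ∪ Z)).image
    (fun c e => if h : e ∈ completeMultipartiteEdges m Pp then c e h else 0)

noncomputable def TT (m n s M : ℕ) : Finset ((Fin m → Finset ℕ) × (Finset ℕ → ℕ)) :=
  (Ppool m n s ×ˢ Zpool n M).biUnion
    (fun q => ({q.1} : Finset (Fin m → Finset ℕ)) ×ˢ FunF m q.1 q.2)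

def SS (m n s k : ℕ) : Set (Finset (Finset ℕ) × (Finset ℕ → ℕ)) :=
  {p | (∃ P : Fin m → Finset ℕ,
          (∀ i, P i ⊆ Finset.Icc 1 n) ∧ (∀ i, (P i).card = s) ∧
          (∀ i j, i ≠ j → Disjoint (P i) (P j)) ∧
          p.1 = completeMultipartiteEdges m P) ∧
        (∀ e ∈ p.1, p.2 e ∈ Finset.Icc 1 n ∧ p.2 e ∉ e) ∧
        (∀ e ∉ p.1, p.2 e = 0) ∧
        ¬ HasLooseCycle k (Extension p.1 p.2)}

noncomputable def Enc (m n s : ℕ) (p : Finset (Finset ℕ) × (Finset ℕ → ℕ)) :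
    (Fin m → Finset ℕ) × (Finset ℕ → ℕ) :=
  if h : ∃ P : Fin m → Finset ℕ,
      (∀ i, P i ⊆ Finset.Icc 1 n) ∧ (∀ i, (P i).card = s) ∧
      (∀ i j, i ≠ j → Disjoint (P i) (P j)) ∧
      p.1 = completeMultipartiteEdges m P
  then (h.choose, p.2) else (fun _ => ∅, p.2)

variable {m n s k : ℕ}

lemma card_FunF {Pp : Fin m → Finset ℕ} {Z : Finset ℕ} (hcard : ∀ i, (Pp i).card = s)
    (hZ : Z.card ≤ MM m s k) (hm : 1 ≤ m) (hs : 1 ≤ s) :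
    (FunF m Pp Z).card ≤ (m * s + MM m s k) ^ (s ^ m) := by
  classical
  refine (Finset.card_image_le).trans ?_
  rw [Finset.card_pi]
  have hVZ : (EV Pp ∪ Z).card ≤ m * s + MM m s k := by
    refine (Finset.card_union_le _ _).trans ?_
    exact Nat.add_le_add (card_EV hcard) hZ
  calc ∏ _e ∈ completeMultipartiteEdges m Pp, (EV Pp ∪ Z).card
      ≤ ∏ _e ∈ completeMultipartiteEdges m Pp, (m * s + MM m s k) :=
        Finset.prod_le_prod' (fun _ _ => hVZ)
    _ = (m * s + MM m s k) ^ (completeMultipartiteEdges m Pp).card := by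
        rw [Finset.prod_const]
    _ ≤ (m * s + MM m s k) ^ (s ^ m) := by
        apply Nat.pow_le_pow_right (by nlinarith) (card_K hcard)

lemma card_Zpool_le (hn : 1 ≤ n) (M : ℕ) : (Zpool n M).card ≤ (M + 1) * n ^ M := by
  classical
  have hsub : Zpool n M ⊆ (Finset.range (M + 1)).biUnion
      (fun j => (Finset.Icc 1 n).powersetCard j) := by
    intro Z hZ
    have hZ' := Finset.mem_filter.1 hZ
    refine Finset.mem_biUnion.2 ⟨Z.card, Finset.mem_range.2 (by omega), ?_⟩
    exact Finset.mem_powersetCard.2 ⟨Finset.mem_powerset.1 hZ'.1, rfl⟩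
  refine (Finset.card_le_card hsub).trans ?_
  refine (Finset.card_biUnion_le).trans ?_
  calc ∑ j ∈ Finset.range (M + 1), ((Finset.Icc 1 n).powersetCard j).card
      ≤ ∑ _j ∈ Finset.range (M + 1), n ^ M := by
        apply Finset.sum_le_sum
        intro j hj
        rw [Finset.card_powersetCard, Nat.card_Icc]
        have h1 : (n + 1 - 1).choose j ≤ n ^ j := by
          have : n + 1 - 1 = n := by omega
          rw [this]
          exact Nat.choose_le_pow _ _
        refine h1.trans ?_
        have hj' := Finset.mem_range.1 hj
        exact Nat.pow_le_pow_right hn (by omega : j ≤ M)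
    _ = (M + 1) * n ^ M := by rw [Finset.sum_const, smul_eq_mul]; simp

lemma card_Ppool_le (hn : 1 ≤ n) : (Ppool m n s).card ≤ n ^ (s * m) := by
  classical
  rw [Ppool, Fintype.card_piFinset]
  calc ∏ _i : Fin m, ((Finset.Icc 1 n).powersetCard s).card
      = (((Finset.Icc 1 n).powersetCard s).card) ^ m := by
        rw [Finset.prod_const, Finset.card_univ, Fintype.card_fin]
    _ ≤ (n ^ s) ^ m := by
        apply Nat.pow_le_pow_left
        rw [Finset.card_powersetCard, Nat.card_Icc]
        have : n + 1 - 1 = n := by omega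
        rw [this]
        exact Nat.choose_le_pow _ _
    _ = n ^ (s * m) := by rw [← pow_mul]

lemma card_TT_le (hm : 1 ≤ m) (hs : 1 ≤ s) (hn : 1 ≤ n) :
    (TT m n s (MM m s k)).card ≤
      n ^ (s * m) * ((MM m s k + 1) * n ^ (MM m s k)) * (m * s + MM m s k) ^ (s ^ m) := by
  classical
  refine (Finset.card_biUnion_le).trans ?_
  have hterm : ∀ q ∈ Ppool m n s ×ˢ Zpool n (MM m s k),
      (({q.1} : Finset (Fin m → Finset ℕ)) ×ˢ FunF m q.1 q.2).card ≤
        (m * s + MM m s k) ^ (s ^ m) := by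
    intro q hq
    rw [Finset.card_product, Finset.card_singleton, one_mul]
    have hq' := Finset.mem_product.1 hq
    have hcard : ∀ i, (q.1 i).card = s := by
      intro i
      have := Fintype.mem_piFinset.1 hq'.1 i
      exact (Finset.mem_powersetCard.1 this).2
    have hZc : q.2.card ≤ MM m s k := (Finset.mem_filter.1 hq'.2).2
    exact card_FunF hcard hZc hm hs
  calc ∑ q ∈ Ppool m n s ×ˢ Zpool n (MM m s k),
        (({q.1} : Finset (Fin m → Finset ℕ)) ×ˢ FunF m q.1 q.2).card
      ≤ ∑ _q ∈ Ppool m n s ×ˢ Zpool n (MM m s k), (m * s + MM m s k) ^ (s ^ m) :=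
        Finset.sum_le_sum hterm
    _ = (Ppool m n s ×ˢ Zpool n (MM m s k)).card * (m * s + MM m s k) ^ (s ^ m) := by
        rw [Finset.sum_const, smul_eq_mul]
    _ ≤ (n ^ (s * m) * ((MM m s k + 1) * n ^ (MM m s k))) * (m * s + MM m s k) ^ (s ^ m) := by
        apply Nat.mul_le_mul_right
        rw [Finset.card_product]
        exact Nat.mul_le_mul (card_Ppool_le hn) (card_Zpool_le hn _)
    _ = n ^ (s * m) * ((MM m s k + 1) * n ^ (MM m s k)) * (m * s + MM m s k) ^ (s ^ m) := by
        ring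

lemma main_count (hm : 3 ≤ m) (hk : 3 ≤ k) (hs : 1 ≤ s) (hn : 1 ≤ n) :
    (SS m n s k).ncard ≤
      n ^ (s * m) * ((MM m s k + 1) * n ^ (MM m s k)) * (m * s + MM m s k) ^ (s ^ m) := by
  classical
  have h := Set.ncard_le_ncard_of_injOn (Enc m n s)
    (s := SS m n s k) (t := ↑(TT m n s (MM m s k))) ?_ ?_ (Finset.finite_toSet _)
  · rw [Set.ncard_coe_finset] at h
    exact h.trans (card_TT_le (by omega) hs hn)
  · -- maps to
    intro p hp
    obtain ⟨hex, hIcc, hzero, hnocyc⟩ := hp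
    rw [Enc, dif_pos hex]
    obtain ⟨hP1, hP2, hP3, hP4⟩ := hex.choose_spec
    set P0 := hex.choose with hP0
    set Z := (p.1.image p.2) \ EV P0 with hZdef
    refine Finset.mem_coe.2 (Finset.mem_biUnion.2 ⟨(P0, Z), ?_, ?_⟩)
    · refine Finset.mem_product.2 ⟨?_, ?_⟩
      · refine Fintype.mem_piFinset.2 ?_
        intro i
        exact Finset.mem_powersetCard.2 ⟨hP1 i, hP2 i⟩
      · refine Finset.mem_filter.2 ⟨?_, ?_⟩
        · refine Finset.mem_powerset.2 ?_
          intro z hz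
          have hz1 := (Finset.mem_sdiff.1 hz).1
          obtain ⟨e, he, rfl⟩ := Finset.mem_image.1 hz1
          exact (hIcc e he).1
        · have := colors_bound hm hk hs hP2 hP4 hnocyc
          rw [MM]
          rw [hZdef]
          exact this
    · refine Finset.mem_product.2 ⟨Finset.mem_singleton_self _, ?_⟩
      rw [FunF]
      refine Finset.mem_image.2 ⟨fun e _ => p.2 e, ?_, ?_⟩
      · refine Finset.mem_pi.2 ?_
        intro e he
        have heG : e ∈ p.1 := by rw [hP4]; exact he
        by_cases hv : p.2 e ∈ EV P0
        · exact Finset.mem_union.2 (Or.inl hv)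
        · refine Finset.mem_union.2 (Or.inr ?_)
          rw [hZdef]
          exact Finset.mem_sdiff.2 ⟨Finset.mem_image.2 ⟨e, heG, rfl⟩, hv⟩
      · funext e
        by_cases he : e ∈ completeMultipartiteEdges m P0
        · rw [dif_pos he]
        · rw [dif_neg he]
          symm
          apply hzero
          rw [hP4]
          exact he
  · -- injective
    intro p hp q hq hpq
    obtain ⟨hexp, -, -, -⟩ := hp
    obtain ⟨hexq, -, -, -⟩ := hq
    rw [Enc, dif_pos hexp, Enc, dif_pos hexq] at hpq
    have h1 : hexp.choose = hexq.choose := by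
      have := congrArg Prod.fst hpq
      simpa using this
    have h2 : p.2 = q.2 := by
      have := congrArg Prod.snd hpq
      simpa using this
    have h3 : p.1 = q.1 := by
      rw [hexp.choose_spec.2.2.2, hexq.choose_spec.2.2.2, h1]
    exact Prod.ext_iff.2 ⟨h3, h2⟩

end LCAux

namespace LCAux

lemma logb_le_two_mul {x : ℝ} (hx : 1 ≤ x) : Real.logb 2 x ≤ 2 * x := by
  have hl2 : (0.6931471803 : ℝ) < Real.log 2 := Real.log_two_gt_d9
  have hlx : Real.log x ≤ x - 1 := Real.log_le_sub_one_of_pos (by linarith)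
  rw [Real.logb, div_le_iff₀ (by linarith : (0:ℝ) < Real.log 2)]
  nlinarith

end LCAux

set_option maxHeartbeats 2000000 in
/-- For `r > 3`, `k ≥ 3` there is `C > 0` such that for all `n ≥ 2`, `s ≥ 1`, the number
of edge-colored balanced complete `(r-1)`-partite `(r-1)`-graphs `K_{s:r-1}` with vertex
set in `[n]` whose extension is `C_k`-free is at most
`2^(C·(s^(r-2)·log₂ n + s^(r-1)·(1 + log₂ s)))`. -/
theorem count_colored_Ksr (r k : ℕ) (hr : 3 < r) (hk : 3 ≤ k) :
    ∃ C : ℝ, 0 < C ∧ ∀ n s : ℕ, 2 ≤ n → 1 ≤ s →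
      (({p : Finset (Finset ℕ) × (Finset ℕ → ℕ) |
          (∃ P : Fin (r - 1) → Finset ℕ,
            (∀ i, P i ⊆ Finset.Icc 1 n) ∧ (∀ i, (P i).card = s) ∧
            (∀ i j, i ≠ j → Disjoint (P i) (P j)) ∧
            p.1 = completeMultipartiteEdges (r - 1) P) ∧
          (∀ e ∈ p.1, p.2 e ∈ Finset.Icc 1 n ∧ p.2 e ∉ e) ∧
          (∀ e ∉ p.1, p.2 e = 0) ∧
          ¬ HasLooseCycle k (Extension p.1 p.2)} : Set _).ncard : ℝ)
        ≤ (2 : ℝ) ^ (C * ((s : ℝ) ^ (r - 2) * Real.logb 2 n +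
            (s : ℝ) ^ (r - 1) * (1 + Real.logb 2 s))) := by
  classical
  set m := r - 1 with hmdef
  have hm : 3 ≤ m := by omega
  set c0 : ℕ := m ^ 2 * (k * (m + 1) + 1) with hc0def
  refine ⟨((6 * c0 + 6 * m + 6 : ℕ) : ℝ),
    by exact_mod_cast (by omega : (0:ℕ) < 6 * c0 + 6 * m + 6), ?_⟩
  intro n s hn hs
  rw [show r - 2 = m - 1 by omega]
  set M := LCAux.MM m s k with hMdef
  set NB := n ^ (s * m) * ((M + 1) * n ^ M) * (m * s + M) ^ (s ^ m) with hNBdef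
  have hs1 : (1:ℝ) ≤ (s:ℝ) := by exact_mod_cast hs
  have hn2 : (2:ℝ) ≤ (n:ℝ) := by exact_mod_cast hn
  have hm3 : (3:ℝ) ≤ (m:ℝ) := by exact_mod_cast hm
  have hc00 : (0:ℝ) ≤ (c0:ℝ) := Nat.cast_nonneg _
  have hM0 : (0:ℝ) ≤ (M:ℝ) := Nat.cast_nonneg _
  -- nat facts
  have hsle : s ≤ s ^ (m - 1) := by
    calc s = s ^ 1 := (pow_one s).symm
      _ ≤ s ^ (m - 1) := Nat.pow_le_pow_right hs (by omega)
  have hMnat : M = c0 * s ^ (m - 1) := by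
    rw [hMdef, LCAux.MM, hc0def]
    have hs2 : s ^ 2 * s ^ (m - 3) = s ^ (m - 1) := by
      rw [← pow_add]; congr 1; omega
    calc (m * s) ^ 2 * ((k * (m + 1) + 1) * s ^ (m - 3))
        = m ^ 2 * (k * (m + 1) + 1) * (s ^ 2 * s ^ (m - 3)) := by ring
      _ = m ^ 2 * (k * (m + 1) + 1) * s ^ (m - 1) := by rw [hs2]
  -- the counting bound
  have hcount : (LCAux.SS m n s k).ncard ≤ NB := LCAux.main_count hm hk hs (by omega)
  have hNBpos : 0 < NB := by
    have h1 : 0 < n ^ (s * m) := Nat.pow_pos (by omega)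
    have h2 : 0 < (M + 1) * n ^ M := Nat.mul_pos (by omega) (Nat.pow_pos (by omega))
    have hms : 0 < m * s := Nat.mul_pos (by omega) (by omega)
    have h3 : 0 < (m * s + M) ^ (s ^ m) := Nat.pow_pos (by omega)
    rw [hNBdef]
    exact Nat.mul_pos (Nat.mul_pos h1 h2) h3
  -- real abbreviations
  set L := Real.logb 2 (n:ℝ) with hLdef
  set l := Real.logb 2 (s:ℝ) with hldef
  set A := (s:ℝ) ^ (m - 1) with hAdef
  set B := (s:ℝ) ^ m with hBdef
  have hL1 : 1 ≤ L := by
    rw [hLdef]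
    calc (1:ℝ) = Real.logb 2 2 := (Real.logb_self_eq_one (by norm_num)).symm
      _ ≤ Real.logb 2 (n:ℝ) := Real.logb_le_logb_of_le (by norm_num) (by norm_num) hn2
  have hl0 : 0 ≤ l := Real.logb_nonneg (by norm_num) hs1
  have hA1 : 1 ≤ A := by
    rw [hAdef]
    calc (1:ℝ) = (s:ℝ) ^ 0 := (pow_zero _).symm
      _ ≤ (s:ℝ) ^ (m - 1) := pow_le_pow_right₀ hs1 (Nat.zero_le _)
  have hsA : (s:ℝ) ≤ A := by
    rw [hAdef]
    calc (s:ℝ) = (s:ℝ) ^ 1 := (pow_one _).symm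
      _ ≤ (s:ℝ) ^ (m - 1) := pow_le_pow_right₀ hs1 (by omega)
  have hB1 : 1 ≤ B := by
    rw [hBdef]
    calc (1:ℝ) = (s:ℝ) ^ 0 := (pow_zero _).symm
      _ ≤ (s:ℝ) ^ m := pow_le_pow_right₀ hs1 (Nat.zero_le _)
  have hA0 : 0 ≤ A := by linarith
  have hB0 : 0 ≤ B := by linarith
  have hMcast : (M:ℝ) = (c0:ℝ) * A := by
    rw [hMnat, hAdef]
    push_cast
    ring
  have hALA : A ≤ A * L := by nlinarith
  have hAL0 : 0 ≤ A * L := by nlinarith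
  have hBl0 : 0 ≤ B * l := by nlinarith
  have hB10 : 0 ≤ B * (1 + l) := by nlinarith
  -- decompose the logarithm
  have hNBcast : ((NB : ℕ) : ℝ) =
      (n:ℝ) ^ (s * m) * (((M:ℝ) + 1) * (n:ℝ) ^ M) * ((m:ℝ) * s + M) ^ (s ^ m) := by
    rw [hNBdef]
    push_cast
    ring
  have hQpos : (0:ℝ) < (m:ℝ) * s + M := by nlinarith [hm3, hs1, hM0]
  have hlog : Real.logb 2 ((NB : ℕ) : ℝ) =
      ((s * m : ℕ):ℝ) * L + (Real.logb 2 ((M:ℝ) + 1) + ((M:ℕ):ℝ) * L) +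
        ((s ^ m : ℕ):ℝ) * Real.logb 2 ((m:ℝ) * s + M) := by
    rw [hNBcast]
    rw [Real.logb_mul (by positivity) (by positivity),
      Real.logb_mul (by positivity) (by positivity),
      Real.logb_mul (by positivity) (by positivity),
      Real.logb_pow, Real.logb_pow, Real.logb_pow]
    all_goals (push_cast; ring)
  -- bound each term
  have e1 : ((s * m : ℕ):ℝ) * L ≤ (m:ℝ) * (A * L) := by
    have h1 : ((s * m : ℕ):ℝ) * L = (s:ℝ) * ((m:ℝ) * L) := by push_cast; ring
    rw [h1]
    calc (s:ℝ) * ((m:ℝ) * L) ≤ A * ((m:ℝ) * L) := by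
          apply mul_le_mul_of_nonneg_right hsA
          have : (0:ℝ) ≤ (m:ℝ) := by linarith
          nlinarith
      _ = (m:ℝ) * (A * L) := by ring
  have e2 : Real.logb 2 ((M:ℝ) + 1) ≤ (2 * (c0:ℝ) + 2) * (A * L) := by
    have h1 : Real.logb 2 ((M:ℝ) + 1) ≤ 2 * ((M:ℝ) + 1) :=
      LCAux.logb_le_two_mul (by linarith)
    have h2 : 2 * ((M:ℝ) + 1) = 2 * (c0:ℝ) * A + 2 := by rw [hMcast]; ring
    have h3 : 2 * (c0:ℝ) * A + 2 ≤ 2 * (c0:ℝ) * (A * L) + 2 * (A * L) := by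
      have h4 := mul_le_mul_of_nonneg_left hALA (show (0:ℝ) ≤ 2 * (c0:ℝ) by linarith)
      have h5 : (1:ℝ) ≤ A * L := by nlinarith
      linarith
    calc Real.logb 2 ((M:ℝ) + 1) ≤ 2 * ((M:ℝ) + 1) := h1
      _ = 2 * (c0:ℝ) * A + 2 := h2
      _ ≤ 2 * (c0:ℝ) * (A * L) + 2 * (A * L) := h3
      _ = (2 * (c0:ℝ) + 2) * (A * L) := by ring
  have e3 : ((M:ℕ):ℝ) * L = (c0:ℝ) * (A * L) := by rw [hMcast]; ring
  have e4 : ((s ^ m : ℕ):ℝ) * Real.logb 2 ((m:ℝ) * s + M) ≤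
      (3 * (m:ℝ) + 2 * c0) * (B * (1 + l)) := by
    have hcastB : ((s ^ m : ℕ):ℝ) = B := by rw [hBdef]; push_cast; ring
    have hQle : (m:ℝ) * s + M ≤ ((m:ℝ) + c0) * A := by
      have hnat : m * s + M ≤ (m + c0) * s ^ (m - 1) := by
        have h1 : m * s ≤ m * s ^ (m - 1) := Nat.mul_le_mul_left m hsle
        rw [hMnat, add_mul]
        omega
      have := (Nat.cast_le (α := ℝ)).2 hnat
      push_cast at this
      rw [hAdef]
      linarith
    have h2 : Real.logb 2 ((m:ℝ) * s + M) ≤ Real.logb 2 (((m:ℝ) + c0) * A) :=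
      Real.logb_le_logb_of_le (by norm_num) hQpos hQle
    have h3 : Real.logb 2 (((m:ℝ) + c0) * A) =
        Real.logb 2 ((m:ℝ) + c0) + ((m - 1 : ℕ):ℝ) * l := by
      rw [Real.logb_mul (by positivity) (by positivity), hAdef, hldef, Real.logb_pow]
    have h4 : Real.logb 2 ((m:ℝ) + c0) ≤ 2 * ((m:ℝ) + c0) :=
      LCAux.logb_le_two_mul (by linarith)
    have h5 : ((m - 1 : ℕ):ℝ) * l ≤ (m:ℝ) * l := by
      have : ((m - 1 : ℕ):ℝ) ≤ (m:ℝ) := by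
        exact_mod_cast Nat.sub_le m 1
      exact mul_le_mul_of_nonneg_right this hl0
    have h6 : Real.logb 2 ((m:ℝ) * s + M) ≤ 2 * ((m:ℝ) + c0) + (m:ℝ) * l := by
      rw [h3] at h2
      linarith
    rw [hcastB]
    calc B * Real.logb 2 ((m:ℝ) * s + M) ≤ B * (2 * ((m:ℝ) + c0) + (m:ℝ) * l) :=
          mul_le_mul_of_nonneg_left h6 hB0
      _ = 2 * ((m:ℝ) + c0) * B + (m:ℝ) * (B * l) := by ring
      _ ≤ (3 * (m:ℝ) + 2 * c0) * B + (3 * (m:ℝ) + 2 * c0) * (B * l) := by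
          have hb1 : 2 * ((m:ℝ) + c0) * B ≤ (3 * (m:ℝ) + 2 * c0) * B :=
            mul_le_mul_of_nonneg_right (by linarith) hB0
          have hb2 : (m:ℝ) * (B * l) ≤ (3 * (m:ℝ) + 2 * c0) * (B * l) :=
            mul_le_mul_of_nonneg_right (by linarith) hBl0
          linarith
      _ = (3 * (m:ℝ) + 2 * c0) * (B * (1 + l)) := by ring
  -- final exponent bound
  set CR := ((6 * c0 + 6 * m + 6 : ℕ) : ℝ) with hCRdef
  have hCR1 : (m:ℝ) + (2 * (c0:ℝ) + 2) + c0 ≤ CR := by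
    rw [hCRdef]; push_cast; linarith
  have hCR2 : 3 * (m:ℝ) + 2 * c0 ≤ CR := by
    rw [hCRdef]; push_cast; linarith
  have hexp : Real.logb 2 ((NB : ℕ) : ℝ) ≤ CR * (A * L + B * (1 + l)) := by
    rw [hlog]
    have t1 : ((s * m : ℕ):ℝ) * L + (Real.logb 2 ((M:ℝ) + 1) + ((M:ℕ):ℝ) * L) +
        ((s ^ m : ℕ):ℝ) * Real.logb 2 ((m:ℝ) * s + M) ≤
        ((m:ℝ) + (2 * (c0:ℝ) + 2) + c0) * (A * L) + (3 * (m:ℝ) + 2 * c0) * (B * (1 + l)) := by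
      rw [e3] at *
      linarith
    have t2 : ((m:ℝ) + (2 * (c0:ℝ) + 2) + c0) * (A * L) ≤ CR * (A * L) :=
      mul_le_mul_of_nonneg_right hCR1 hAL0
    have t3 : (3 * (m:ℝ) + 2 * c0) * (B * (1 + l)) ≤ CR * (B * (1 + l)) :=
      mul_le_mul_of_nonneg_right hCR2 hB10
    calc _ ≤ ((m:ℝ) + (2 * (c0:ℝ) + 2) + c0) * (A * L) +
          (3 * (m:ℝ) + 2 * c0) * (B * (1 + l)) := t1
      _ ≤ CR * (A * L) + CR * (B * (1 + l)) := by linarith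
      _ = CR * (A * L + B * (1 + l)) := by ring
  -- put everything together
  calc ((LCAux.SS m n s k).ncard : ℝ) ≤ ((NB : ℕ) : ℝ) := by exact_mod_cast hcount
    _ = (2:ℝ) ^ Real.logb 2 ((NB : ℕ) : ℝ) := by
        rw [Real.rpow_logb (by norm_num) (by norm_num) (by exact_mod_cast hNBpos)]
    _ ≤ (2:ℝ) ^ (CR * (A * L + B * (1 + l))) :=
        Real.rpow_le_rpow_of_exponent_le (by norm_num) hexp
end

section
/- Let r, k ≥ 3 be integers and let H be a nonempty r-uniform hypergraph. If every (r−1)-set of vertices with positive codegree in H has codegree greater than r·k, then H contains a loose k-cycle. -/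
section Aux

variable {r k : ℕ} {H : Finset (Finset ℕ)}

/-- Pick a completion vertex of a sub-edge avoiding a small forbidden set. -/
lemma aux_pick
    (hcodeg : ∀ S : Finset ℕ, S.card = r - 1 →
      (∃ v, v ∉ S ∧ insert v S ∈ H) →
      r * k < ({v : ℕ | v ∉ S ∧ insert v S ∈ H} : Set ℕ).ncard)
    {S : Finset ℕ} (hS : S.card = r - 1) (hsub : ∃ v, v ∉ S ∧ insert v S ∈ H)
    {F : Finset ℕ} (hF : F.card ≤ r * k) :
    ∃ v, v ∉ S ∧ v ∉ F ∧ insert v S ∈ H := by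
  by_contra h
  push_neg at h
  have hsubset : {v : ℕ | v ∉ S ∧ insert v S ∈ H} ⊆ (F : Set ℕ) := by
    intro v hv
    by_contra hvF
    exact h v hv.1 hvF hv.2
  have h1 := Set.ncard_le_ncard hsubset F.finite_toSet
  rw [Set.ncard_coe_finset] at h1
  have h2 := hcodeg S hS hsub
  omega

/-- Any `(r-1)`-subset of an edge is a sub-edge. -/
lemma aux_subedge (hr : 3 ≤ r) (huni : ∀ e ∈ H, e.card = r) {f S : Finset ℕ}
    (hf : f ∈ H) (hSf : S ⊆ f) (hS : S.card = r - 1) :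
    ∃ v, v ∉ S ∧ insert v S ∈ H := by
  have hfc := huni f hf
  have hne : S ≠ f := by
    intro h; rw [h, hfc] at hS; omega
  obtain ⟨v, hvf, hvS⟩ := Finset.exists_of_ssubset (hSf.ssubset_of_ne hne)
  refine ⟨v, hvS, ?_⟩
  have heq : insert v S = f := by
    apply Finset.eq_of_subset_of_card_le (Finset.insert_subset_iff.mpr ⟨hvf, hSf⟩)
    rw [Finset.card_insert_of_notMem hvS]; omega
  rw [heq]; exact hf

/-- Swap chain: from a sub-edge containing `K`, obtain an edge containing `K`
whose other vertices avoid `F`. -/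
lemma aux_chain (hr : 3 ≤ r)
    (hcodeg : ∀ S : Finset ℕ, S.card = r - 1 →
      (∃ v, v ∉ S ∧ insert v S ∈ H) →
      r * k < ({v : ℕ | v ∉ S ∧ insert v S ∈ H} : Set ℕ).ncard) :
    ∀ (n : ℕ) (S K F : Finset ℕ), S.card = r - 1 →
      (∃ v, v ∉ S ∧ insert v S ∈ H) → K ⊆ S → F.card ≤ r * k →
      ((S \ K) ∩ F).card = n →
      ∃ E, E ∈ H ∧ K ⊆ E ∧ E.card = r ∧ (E \ K) ∩ F = ∅ := by
  intro n
  induction n with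
  | zero =>
    intro S K F hS hsub hK hF hbad
    obtain ⟨z, hzS, hzF, hzH⟩ := aux_pick hcodeg hS hsub hF
    refine ⟨insert z S, hzH, hK.trans (Finset.subset_insert _ _), ?_, ?_⟩
    · rw [Finset.card_insert_of_notMem hzS]; omega
    · have hempty : (S \ K) ∩ F = ∅ := Finset.card_eq_zero.mp hbad
      ext x
      simp only [Finset.mem_inter, Finset.mem_sdiff, Finset.mem_insert,
        Finset.notMem_empty, iff_false, not_and]
      rintro ⟨hx1 | hx1, hx2⟩ hx3
      · exact hzF (hx1 ▸ hx3)
      · have : x ∈ (S \ K) ∩ F := by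
          simp only [Finset.mem_inter, Finset.mem_sdiff]
          exact ⟨⟨hx1, hx2⟩, hx3⟩
        rw [hempty] at this
        exact Finset.notMem_empty x this
  | succ n ih =>
    intro S K F hS hsub hK hF hbad
    have hne : ((S \ K) ∩ F).Nonempty := by
      rw [← Finset.card_pos, hbad]; omega
    obtain ⟨w, hw⟩ := hne
    simp only [Finset.mem_inter, Finset.mem_sdiff] at hw
    obtain ⟨⟨hwS, hwK⟩, hwF⟩ := hw
    obtain ⟨z, hzS, hzF, hzH⟩ := aux_pick hcodeg hS hsub hF
    have hwz : w ≠ z := fun h => hzS (h ▸ hwS)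
    have hzE : z ∉ S.erase w := fun h => hzS (Finset.mem_of_mem_erase h)
    have hS'card : (insert z (S.erase w)).card = r - 1 := by
      rw [Finset.card_insert_of_notMem hzE, Finset.card_erase_of_mem hwS]; omega
    have hsub' : ∃ v, v ∉ insert z (S.erase w) ∧ insert v (insert z (S.erase w)) ∈ H := by
      refine ⟨w, ?_, ?_⟩
      · simp only [Finset.mem_insert, Finset.mem_erase]
        push_neg
        exact ⟨hwz, fun h => absurd rfl h⟩
      · have heq : insert w (insert z (S.erase w)) = insert z S := by
          rw [Finset.insert_comm, Finset.insert_erase hwS]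
        rw [heq]; exact hzH
    have hK' : K ⊆ insert z (S.erase w) := by
      intro x hx
      have hxS := hK hx
      have hxw : x ≠ w := fun h => hwK (h ▸ hx)
      exact Finset.mem_insert_of_mem (Finset.mem_erase.mpr ⟨hxw, hxS⟩)
    have hbad' : ((insert z (S.erase w) \ K) ∩ F).card = n := by
      have heq : (insert z (S.erase w) \ K) ∩ F = ((S \ K) ∩ F).erase w := by
        ext x
        simp only [Finset.mem_inter, Finset.mem_sdiff, Finset.mem_insert, Finset.mem_erase]
        constructor
        · rintro ⟨⟨hx1 | ⟨hxw, hxS⟩, hx2⟩, hx3⟩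
          · exact absurd (hx1 ▸ hx3) hzF
          · exact ⟨hxw, ⟨hxS, hx2⟩, hx3⟩
        · rintro ⟨hxw, ⟨hxS, hxK⟩, hxF⟩
          exact ⟨⟨Or.inr ⟨hxw, hxS⟩, hxK⟩, hxF⟩
      have hwmem : w ∈ (S \ K) ∩ F := by
        simp only [Finset.mem_inter, Finset.mem_sdiff]
        exact ⟨⟨hwS, hwK⟩, hwF⟩
      rw [heq, Finset.card_erase_of_mem hwmem, hbad]
      omega
    exact ih (insert z (S.erase w)) K F hS'card hsub' hK' hF hbad'

/-- Given an edge `f ⊇ K`, find an edge containing `K` avoiding `F` otherwise. -/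
lemma aux_exists_edge (hr : 3 ≤ r) (huni : ∀ e ∈ H, e.card = r)
    (hcodeg : ∀ S : Finset ℕ, S.card = r - 1 →
      (∃ v, v ∉ S ∧ insert v S ∈ H) →
      r * k < ({v : ℕ | v ∉ S ∧ insert v S ∈ H} : Set ℕ).ncard)
    {f K F : Finset ℕ} (hf : f ∈ H) (hK : K ⊆ f) (hKc : K.card ≤ r - 1)
    (hF : F.card ≤ r * k) :
    ∃ E, E ∈ H ∧ K ⊆ E ∧ E.card = r ∧ (E \ K) ∩ F = ∅ := by
  have hfc := huni f hf
  obtain ⟨S, hKS, hSf, hScard⟩ :=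
    Finset.exists_subsuperset_card_eq hK (n := r - 1 - K.card + K.card) (by omega) (by omega)
  have hScard' : S.card = r - 1 := by omega
  exact aux_chain hr hcodeg _ S K F hScard'
    (aux_subedge hr huni hf hSf hScard') hKS hF rfl

/-- One extension step for phase 1: from an edge containing `x` and `a`,
produce a fresh vertex `z` and an edge containing `x`, `a`, `z`. -/
lemma aux_step1 (hr : 3 ≤ r) (huni : ∀ e ∈ H, e.card = r)
    (hcodeg : ∀ S : Finset ℕ, S.card = r - 1 →
      (∃ v, v ∉ S ∧ insert v S ∈ H) →
      r * k < ({v : ℕ | v ∉ S ∧ insert v S ∈ H} : Set ℕ).ncard)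
    {f F : Finset ℕ} {x a : ℕ} (hf : f ∈ H) (hx : x ∈ f) (ha : a ∈ f)
    (hxa : x ≠ a) (hF : F.card ≤ r * k) :
    ∃ z f', z ∉ F ∧ z ≠ x ∧ z ≠ a ∧ f' ∈ H ∧ x ∈ f' ∧ a ∈ f' ∧ z ∈ f' := by
  have hfc := huni f hf
  have hpair : ({x, a} : Finset ℕ) ⊆ f := by
    simp [Finset.insert_subset_iff, hx, ha]
  have hpc : ({x, a} : Finset ℕ).card = 2 := by
    rw [Finset.card_insert_of_notMem (by simp [hxa]), Finset.card_singleton]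
  obtain ⟨S, hKS, hSf, hScard⟩ :=
    Finset.exists_subsuperset_card_eq hpair (n := r - 1 - 2 + ({x, a} : Finset ℕ).card) (by omega) (by rw [hpc, hfc]; omega)
  rw [hpc] at hScard
  have hScard' : S.card = r - 1 := by omega
  have hxS : x ∈ S := hKS (by simp)
  have haS : a ∈ S := hKS (by simp)
  obtain ⟨z, hzS, hzF, hzH⟩ := aux_pick hcodeg hScard'
    (aux_subedge hr huni hf hSf hScard') hF
  exact ⟨z, insert z S, hzF, fun h => hzS (h ▸ hxS), fun h => hzS (h ▸ haS), hzH,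
    Finset.mem_insert_of_mem hxS, Finset.mem_insert_of_mem haS, Finset.mem_insert_self _ _⟩

/-- Phase 1: build distinct link vertices with witness edges. -/
lemma aux_phase1 (hr : 3 ≤ r) (hk : 3 ≤ k) (huni : ∀ e ∈ H, e.card = r)
    (hcodeg : ∀ S : Finset ℕ, S.card = r - 1 →
      (∃ v, v ∉ S ∧ insert v S ∈ H) →
      r * k < ({v : ℕ | v ∉ S ∧ insert v S ∈ H} : Set ℕ).ncard)
    {g : Finset ℕ} {a b : ℕ} (hg : g ∈ H) (ha : a ∈ g) (hb : b ∈ g) (hab : a ≠ b) :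
    ∀ m, m + 2 ≤ k → ∃ (v : ℕ → ℕ) (w : ℕ → Finset ℕ) (f : Finset ℕ),
      v 0 = b ∧
      (∀ i ≤ m, ∀ j ≤ m, i ≠ j → v i ≠ v j) ∧
      (∀ i ≤ m, v i ≠ a) ∧
      (∀ i, 1 ≤ i → i ≤ m → w i ∈ H ∧ v (i - 1) ∈ w i ∧ v i ∈ w i) ∧
      f ∈ H ∧ v m ∈ f ∧ a ∈ f := by
  intro m
  induction m with
  | zero =>
    intro _
    refine ⟨fun _ => b, fun _ => g, g, rfl, ?_, fun i _ => hab.symm, ?_, hg, hb, ha⟩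
    · intro i hi j hj hij
      exact absurd (by omega : i = j) hij
    · intro i h1 h0
      omega
  | succ m ih =>
    intro hm
    obtain ⟨v, w, f, hv0, hinj, hva, hw, hfH, hvf, haf⟩ := ih (by omega)
    have hFc : (insert a ((Finset.range (m + 1)).image v)).card ≤ r * k := by
      have h1 := Finset.card_insert_le a ((Finset.range (m + 1)).image v)
      have h2 : ((Finset.range (m + 1)).image v).card ≤ m + 1 :=
        le_trans Finset.card_image_le (by rw [Finset.card_range])
      have h3 : k ≤ r * k := Nat.le_mul_of_pos_left k (by omega)
      omega
    obtain ⟨z, f', hzF, hzx, hza, hf'H, hxf', haf', hzf'⟩ :=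
      aux_step1 hr huni hcodeg hfH hvf haf (hva m le_rfl) hFc
    have hzv : ∀ i ≤ m, z ≠ v i := by
      intro i hi h
      exact hzF (Finset.mem_insert_of_mem
        (Finset.mem_image.mpr ⟨i, Finset.mem_range.mpr (by omega), h.symm⟩))
    have hza' : z ≠ a := fun h => hzF (by rw [h]; exact Finset.mem_insert_self a _)
    refine ⟨fun i => if i = m + 1 then z else v i,
      fun i => if i = m + 1 then f' else w i, f', ?_, ?_, ?_, ?_, hf'H, ?_, haf'⟩
    · simp only [show (0 : ℕ) ≠ m + 1 by omega, if_false]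
      exact hv0
    · intro i hi j hj hij
      simp only
      by_cases hi' : i = m + 1 <;> by_cases hj' : j = m + 1
      · omega
      · rw [if_pos hi', if_neg hj']
        exact hzv j (by omega)
      · rw [if_neg hi', if_pos hj']
        exact fun h => (hzv i (by omega)) h.symm
      · rw [if_neg hi', if_neg hj']
        exact hinj i (by omega) j (by omega) hij
    · intro i hi
      simp only
      by_cases hi' : i = m + 1
      · rw [if_pos hi']; exact hza'
      · rw [if_neg hi']; exact hva i (by omega)
    · intro i h1 h2
      simp only
      by_cases hi' : i = m + 1
      · rw [if_pos hi', if_pos hi', if_neg (show i - 1 ≠ m + 1 by omega)]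
        have : i - 1 = m := by omega
        rw [this]
        exact ⟨hf'H, hxf', hzf'⟩
      · rw [if_neg hi', if_neg hi', if_neg (show i - 1 ≠ m + 1 by omega)]
        exact hw i h1 (by omega)
    · simp only [if_pos rfl]
      exact hzf'

/-- Phase 2: build the actual cycle edges from the witnesses. -/
lemma aux_phase2 (hr : 3 ≤ r) (hk : 3 ≤ k) (huni : ∀ e ∈ H, e.card = r)
    (hcodeg : ∀ S : Finset ℕ, S.card = r - 1 →
      (∃ v, v ∉ S ∧ insert v S ∈ H) →
      r * k < ({v : ℕ | v ∉ S ∧ insert v S ∈ H} : Set ℕ).ncard)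
    (u : ℕ → ℕ) (W : ℕ → Finset ℕ)
    (hu : ∀ i < k, ∀ j < k, i ≠ j → u i ≠ u j)
    (hW : ∀ i < k, W i ∈ H ∧ u (if i = 0 then k - 1 else i - 1) ∈ W i ∧ u i ∈ W i) :
    ∀ m ≤ k, ∃ E : ℕ → Finset ℕ, ∀ i < m,
      E i ∈ H ∧ (E i).card = r ∧
      ({u (if i = 0 then k - 1 else i - 1), u i} : Finset ℕ) ⊆ E i ∧
      (E i \ ({u (if i = 0 then k - 1 else i - 1), u i} : Finset ℕ)) ∩
        ((Finset.range k).image u ∪ (Finset.range i).biUnion E) = ∅ := by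
  have hpk : ∀ i < k, (if i = 0 then k - 1 else i - 1) < k := by
    intro i hi; split_ifs <;> omega
  have hpne : ∀ i < k, (if i = 0 then k - 1 else i - 1) ≠ i := by
    intro i hi; split_ifs <;> omega
  have hKc : ∀ i < k, ({u (if i = 0 then k - 1 else i - 1), u i} : Finset ℕ).card = 2 := by
    intro i hi
    rw [Finset.card_insert_of_notMem
      (by simp only [Finset.mem_singleton]
          exact hu _ (hpk i hi) i hi (hpne i hi)), Finset.card_singleton]
  have hKV : ∀ i < k, ({u (if i = 0 then k - 1 else i - 1), u i} : Finset ℕ) ⊆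
      (Finset.range k).image u := by
    intro i hi x hx
    simp only [Finset.mem_insert, Finset.mem_singleton] at hx
    rcases hx with h | h
    · exact Finset.mem_image.mpr ⟨_, Finset.mem_range.mpr (hpk i hi), h.symm⟩
    · exact Finset.mem_image.mpr ⟨i, Finset.mem_range.mpr hi, h.symm⟩
  intro m
  induction m with
  | zero => intro _; exact ⟨fun _ => ∅, by omega⟩
  | succ m ih =>
    intro hm
    obtain ⟨E, hE⟩ := ih (by omega)
    -- cardinality bound of the forbidden set
    have hFc : ((Finset.range k).image u ∪ (Finset.range m).biUnion E).card ≤ r * k := by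
      have h0 : (Finset.range k).image u ∪ (Finset.range m).biUnion E =
          (Finset.range k).image u ∪ ((Finset.range m).biUnion E \ (Finset.range k).image u) := by
        rw [Finset.union_sdiff_self_eq_union]
      have h1 := Finset.card_union_le ((Finset.range k).image u)
        ((Finset.range m).biUnion E \ (Finset.range k).image u)
      rw [← h0] at h1
      have h2 : (Finset.range m).biUnion E \ (Finset.range k).image u =
          (Finset.range m).biUnion (fun j => E j \ (Finset.range k).image u) := by
        ext x
        simp only [Finset.mem_sdiff, Finset.mem_biUnion]
        tauto
      rw [h2] at h1
      have h3 := Finset.card_biUnion_le (s := Finset.range m)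
        (t := fun j => E j \ (Finset.range k).image u)
      have h4 : ∀ j ∈ Finset.range m, (E j \ (Finset.range k).image u).card ≤ r - 2 := by
        intro j hj
        have hjm := Finset.mem_range.mp hj
        obtain ⟨hjH, hjc, hjK, hjF⟩ := hE j hjm
        have hsub : E j \ (Finset.range k).image u ⊆
            E j \ ({u (if j = 0 then k - 1 else j - 1), u j} : Finset ℕ) :=
          Finset.sdiff_subset_sdiff (le_refl _) (hKV j (by omega))
        have hcard : (E j \ ({u (if j = 0 then k - 1 else j - 1), u j} : Finset ℕ)).card
            = r - 2 := by
          rw [Finset.card_sdiff_of_subset hjK, hjc, hKc j (by omega)]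
        calc (E j \ (Finset.range k).image u).card
            ≤ _ := Finset.card_le_card hsub
          _ = r - 2 := hcard
      have h5 : ∑ j ∈ Finset.range m, (E j \ (Finset.range k).image u).card ≤ m * (r - 2) := by
        calc ∑ j ∈ Finset.range m, (E j \ (Finset.range k).image u).card
            ≤ ∑ _j ∈ Finset.range m, (r - 2) := Finset.sum_le_sum h4
          _ = m * (r - 2) := by rw [Finset.sum_const, Finset.card_range, smul_eq_mul]
      have h6 : ((Finset.range k).image u).card ≤ k :=
        le_trans Finset.card_image_le (by rw [Finset.card_range])
      have h7 : m * (r - 2) ≤ k * (r - 2) := Nat.mul_le_mul_right _ (by omega)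
      have h8 : k + k * (r - 2) ≤ r * k := by
        have e1 : k * (r - 2) + k * 1 = k * (r - 1) := by
          rw [← Nat.mul_add]; congr 1; omega
        have e2 : k * (r - 1) ≤ k * r := Nat.mul_le_mul_left _ (by omega)
        have e3 : k * r = r * k := Nat.mul_comm _ _
        omega
      omega
    -- build the new edge
    have hWm := hW m (by omega)
    have hKsub : ({u (if m = 0 then k - 1 else m - 1), u m} : Finset ℕ) ⊆ W m := by
      intro x hx
      simp only [Finset.mem_insert, Finset.mem_singleton] at hx
      rcases hx with h | h
      · rw [h]; exact hWm.2.1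
      · rw [h]; exact hWm.2.2
    obtain ⟨Em, hEmH, hEmK, hEmc, hEmF⟩ := aux_exists_edge hr huni hcodeg hWm.1 hKsub
      (by rw [hKc m (by omega)]; omega) hFc
    refine ⟨Function.update E m Em, ?_⟩
    have hbr : ∀ i' ≤ m, (Finset.range i').biUnion (Function.update E m Em) =
        (Finset.range i').biUnion E := by
      intro i' hi'
      apply Finset.biUnion_congr rfl
      intro j hj
      exact Function.update_of_ne (by have := Finset.mem_range.mp hj; omega) _ _
    intro i hi
    rcases Nat.lt_or_ge i m with hi' | hi'
    · rw [Function.update_of_ne (by omega), hbr i (by omega)]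
      exact hE i hi'
    · have him : i = m := by omega
      subst him
      rw [Function.update_self, hbr i le_rfl]
      exact ⟨hEmH, hEmc, hEmK, hEmF⟩

end Aux

/-- If `H` is a nonempty `r`-graph in which every `(r-1)`-set of positive codegree has
codegree greater than `r·k`, then `H` contains a loose `k`-cycle. -/
theorem loose_cycle_of_large_codegree (r k : ℕ) (hr : 3 ≤ r) (hk : 3 ≤ k)
    (H : Finset (Finset ℕ)) (hne : H.Nonempty) (huni : ∀ e ∈ H, e.card = r)
    (hcodeg : ∀ S : Finset ℕ, S.card = r - 1 →
      (∃ v, v ∉ S ∧ insert v S ∈ H) →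
      r * k < ({v : ℕ | v ∉ S ∧ insert v S ∈ H} : Set ℕ).ncard) :
    HasLooseCycle k H := by
  haveI : NeZero k := ⟨by omega⟩
  obtain ⟨g, hg⟩ := hne
  have hgc := huni g hg
  obtain ⟨a, ha, b, hb, hab⟩ := Finset.one_lt_card.mp (by omega : 1 < g.card)
  obtain ⟨v, w, f, hv0, hinj, hva, hw, hfH, hvf, haf⟩ :=
    aux_phase1 hr hk huni hcodeg hg ha hb hab (k - 2) (by omega)
  -- the full link-vertex sequence
  set u : ℕ → ℕ := fun i => if i = k - 1 then a else v i with hu_def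
  have hukk : u (k - 1) = a := by simp [hu_def]
  have hui : ∀ i < k - 1, u i = v i := by
    intro i hi; simp only [hu_def]; rw [if_neg (by omega)]
  have huinj : ∀ i < k, ∀ j < k, i ≠ j → u i ≠ u j := by
    intro i hi j hj hij
    by_cases hi' : i = k - 1 <;> by_cases hj' : j = k - 1
    · omega
    · rw [hi', hukk, hui j (by omega)]
      exact fun h => hva j (by omega) h.symm
    · rw [hj', hukk, hui i (by omega)]
      exact hva i (by omega)
    · rw [hui i (by omega), hui j (by omega)]
      exact hinj i (by omega) j (by omega) hij
  -- the witnesses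
  set W : ℕ → Finset ℕ := fun i => if i = 0 then g else if i = k - 1 then f else w i
    with hW_def
  have hWp : ∀ i < k, W i ∈ H ∧ u (if i = 0 then k - 1 else i - 1) ∈ W i ∧ u i ∈ W i := by
    intro i hi
    by_cases h0 : i = 0
    · subst h0
      have hWg : W 0 = g := by simp [hW_def]
      rw [hWg, if_pos rfl, hukk, hui 0 (by omega), hv0]
      exact ⟨hg, ha, hb⟩
    · by_cases h1 : i = k - 1
      · have hWf : W i = f := by simp [hW_def, h0, h1, show k - 1 ≠ 0 by omega]
        have h2 : i - 1 = k - 2 := by omega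
        rw [hWf, if_neg h0, h2, hui (k - 2) (by omega), h1, hukk]
        exact ⟨hfH, hvf, haf⟩
      · have hWw : W i = w i := by simp [hW_def, h0, h1]
        rw [hWw, if_neg h0, hui (i - 1) (by omega), hui i (by omega)]
        exact hw i (by omega) (by omega)
  obtain ⟨E, hE⟩ := aux_phase2 hr hk huni hcodeg u W huinj hWp k le_rfl
  -- abbreviations and basic facts
  have hpk : ∀ i < k, (if i = 0 then k - 1 else i - 1) < k := by
    intro i hi; split_ifs <;> omega
  have hKV : ∀ i < k, ({u (if i = 0 then k - 1 else i - 1), u i} : Finset ℕ) ⊆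
      (Finset.range k).image u := by
    intro i hi x hx
    simp only [Finset.mem_insert, Finset.mem_singleton] at hx
    rcases hx with h | h
    · exact Finset.mem_image.mpr ⟨_, Finset.mem_range.mpr (hpk i hi), h.symm⟩
    · exact Finset.mem_image.mpr ⟨i, Finset.mem_range.mpr hi, h.symm⟩
  -- the key pairwise intersection identity
  have hinter : ∀ i < k, ∀ j < k, i ≠ j → E i ∩ E j =
      ({u (if i = 0 then k - 1 else i - 1), u i} : Finset ℕ) ∩
      ({u (if j = 0 then k - 1 else j - 1), u j} : Finset ℕ) := by
    have key : ∀ i < k, ∀ j, j < i → E i ∩ E j =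
        ({u (if i = 0 then k - 1 else i - 1), u i} : Finset ℕ) ∩
        ({u (if j = 0 then k - 1 else j - 1), u j} : Finset ℕ) := by
      intro i hi j hj
      obtain ⟨hiH, hic, hiK, hiF⟩ := hE i hi
      obtain ⟨hjH, hjc, hjK, hjF⟩ := hE j (by omega)
      apply Finset.Subset.antisymm
      · intro x hx
        rw [Finset.mem_inter] at hx
        have hxKi : x ∈ ({u (if i = 0 then k - 1 else i - 1), u i} : Finset ℕ) := by
          by_contra hxK
          have hmem : x ∈ (E i \ ({u (if i = 0 then k - 1 else i - 1), u i} : Finset ℕ)) ∩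
              ((Finset.range k).image u ∪ (Finset.range i).biUnion E) := by
            rw [Finset.mem_inter, Finset.mem_sdiff]
            refine ⟨⟨hx.1, hxK⟩, Finset.mem_union_right _ ?_⟩
            exact Finset.mem_biUnion.mpr ⟨j, Finset.mem_range.mpr hj, hx.2⟩
          rw [hiF] at hmem
          exact Finset.notMem_empty x hmem
        have hxKj : x ∈ ({u (if j = 0 then k - 1 else j - 1), u j} : Finset ℕ) := by
          by_contra hxK
          have hmem : x ∈ (E j \ ({u (if j = 0 then k - 1 else j - 1), u j} : Finset ℕ)) ∩
              ((Finset.range k).image u ∪ (Finset.range j).biUnion E) := by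
            rw [Finset.mem_inter, Finset.mem_sdiff]
            exact ⟨⟨hx.2, hxK⟩, Finset.mem_union_left _ (hKV i hi hxKi)⟩
          rw [hjF] at hmem
          exact Finset.notMem_empty x hmem
        exact Finset.mem_inter.mpr ⟨hxKi, hxKj⟩
      · intro x hx
        rw [Finset.mem_inter] at hx
        exact Finset.mem_inter.mpr ⟨hiK hx.1, hjK hx.2⟩
    intro i hi j hj hij
    rcases Nat.lt_or_ge j i with h | h
    · exact key i hi j h
    · rw [Finset.inter_comm, key j hj i (by omega), Finset.inter_comm]
  -- modular arithmetic helpers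
  have hsucc : ∀ i < k, (i + 1) % k = if i = k - 1 then 0 else i + 1 := by
    intro i hi
    split_ifs with h
    · rw [h, Nat.sub_add_cancel (by omega), Nat.mod_self]
    · exact Nat.mod_eq_of_lt (by omega)
  have hsucclt : ∀ i < k, (i + 1) % k < k := by
    intro i hi; rw [hsucc i hi]; split_ifs <;> omega
  have hpsucc : ∀ i < k, (if (i + 1) % k = 0 then k - 1 else (i + 1) % k - 1) = i := by
    intro i hi
    rcases eq_or_ne i (k - 1) with h | h
    · rw [hsucc i hi, if_pos h, if_pos rfl]
      omega
    · rw [hsucc i hi, if_neg h, if_neg (by omega)]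
      omega
  have hsuccp : ∀ i < k, ((if i = 0 then k - 1 else i - 1) + 1) % k = i := by
    intro i hi
    split_ifs with h
    · rw [Nat.sub_add_cancel (by omega), Nat.mod_self, h]
    · rw [Nat.sub_add_cancel (by omega)]
      exact Nat.mod_eq_of_lt hi
  -- adjacent intersections of the K-sets
  have hKadj : ∀ i < k,
      ({u (if i = 0 then k - 1 else i - 1), u i} : Finset ℕ) ∩
      ({u (if (i + 1) % k = 0 then k - 1 else (i + 1) % k - 1), u ((i + 1) % k)} : Finset ℕ)
      = {u i} := by
    intro i hi
    rw [hpsucc i hi]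
    have hd1 : (if i = 0 then k - 1 else i - 1) ≠ i := by split_ifs <;> omega
    have hd2 : (if i = 0 then k - 1 else i - 1) ≠ (i + 1) % k := by
      rw [hsucc i hi]; split_ifs <;> omega
    have hd3 : i ≠ (i + 1) % k := by rw [hsucc i hi]; split_ifs <;> omega
    ext x
    simp only [Finset.mem_inter, Finset.mem_insert, Finset.mem_singleton]
    constructor
    · rintro ⟨h1 | h1, h2 | h2⟩
      · exact absurd (h1 ▸ h2 : u (if i = 0 then k - 1 else i - 1) = u i).symm
          (fun hh => huinj _ (hpk i hi) i hi hd1 hh.symm)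
      · exact absurd (h1 ▸ h2 : u (if i = 0 then k - 1 else i - 1) = u ((i + 1) % k)).symm
          (fun hh => huinj _ (hpk i hi) _ (hsucclt i hi) hd2 hh.symm)
      · exact h1
      · exact h1
    · intro h
      exact ⟨Or.inr h, Or.inl h⟩
  -- non-adjacent intersections are empty
  have hKnonadj : ∀ i < k, ∀ j < k, i ≠ j → j ≠ (i + 1) % k → i ≠ (j + 1) % k →
      ({u (if i = 0 then k - 1 else i - 1), u i} : Finset ℕ) ∩
      ({u (if j = 0 then k - 1 else j - 1), u j} : Finset ℕ) = ∅ := by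
    intro i hi j hj h1 h2 h3
    have hp1 : (if i = 0 then k - 1 else i - 1) ≠ (if j = 0 then k - 1 else j - 1) := by
      intro h
      apply h1
      rw [← hsuccp i hi, h, hsuccp j hj]
    have hp2 : (if i = 0 then k - 1 else i - 1) ≠ j := by
      intro h
      apply h3
      rw [← hsuccp i hi, h]
    have hp3 : i ≠ (if j = 0 then k - 1 else j - 1) := by
      intro h
      apply h2
      rw [← hsuccp j hj, ← h]
    ext x
    simp only [Finset.mem_inter, Finset.mem_insert, Finset.mem_singleton,
      Finset.notMem_empty, iff_false, not_and]
    rintro (hx | hx) (hy | hy)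
    · exact huinj _ (hpk i hi) _ (hpk j hj) hp1 (hx ▸ hy ▸ rfl)
    · exact huinj _ (hpk i hi) j hj hp2 (hx ▸ hy ▸ rfl)
    · exact huinj i hi _ (hpk j hj) hp3 (hx ▸ hy ▸ rfl)
    · exact huinj i hi j hj h1 (hx ▸ hy ▸ rfl)
  -- ZMod facts
  have hval : ∀ i : ZMod k, i.val < k := fun i => ZMod.val_lt i
  have hvalinj : Function.Injective (ZMod.val : ZMod k → ℕ) := ZMod.val_injective k
  have hvadd : ∀ i : ZMod k, (i + 1).val = (i.val + 1) % k := by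
    intro i
    rw [ZMod.val_add, ZMod.val_one_eq_one_mod, Nat.mod_eq_of_lt (by omega : 1 < k)]
  -- assemble
  refine ⟨fun i => E i.val, fun i => u i.val, ?_, ?_, ?_, ?_, ?_⟩
  · intro i j h
    simp only at h
    by_contra hij
    have hij' : i.val ≠ j.val := fun hh => hij (hvalinj hh)
    have hint := hinter i.val (hval i) j.val (hval j) hij'
    rw [h, Finset.inter_self] at hint
    have hcard : (E j.val).card ≤ 2 := by
      rw [hint]
      refine le_trans (Finset.card_le_card Finset.inter_subset_left) ?_
      refine le_trans (Finset.card_insert_le _ _) ?_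
      simp
    have := (hE j.val (hval j)).2.1
    omega
  · intro i j h
    simp only at h
    by_contra hij
    exact huinj i.val (hval i) j.val (hval j) (fun hh => hij (hvalinj hh)) h
  · intro i
    exact (hE i.val (hval i)).1
  · intro i
    have hne' : i.val ≠ (i + 1).val := by
      rw [hvadd, hsucc i.val (hval i)]
      split_ifs <;> omega
    simp only
    rw [hinter i.val (hval i) (i + 1).val (hval (i + 1)) hne', hvadd]
    exact hKadj i.val (hval i)
  · intro i j hji hji1 hij1
    have h1 : i.val ≠ j.val := fun h => hji (hvalinj h.symm)
    have h2 : j.val ≠ (i.val + 1) % k := by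
      intro h
      exact hji1 (hvalinj (by rw [hvadd]; exact h))
    have h3 : i.val ≠ (j.val + 1) % k := by
      intro h
      exact hij1 (hvalinj (by rw [hvadd]; exact h))
    simp only
    rw [hinter i.val (hval i) j.val (hval j) h1]
    exact hKnonadj i.val (hval i) j.val (hval j) h1 h2 h3
end

section
/- Let r, k ≥ 3 be integers. If F is a nonempty graph in which every edge is contained in more than r·k triangles, then F contains a cycle of length exactly k. -/
/-- Greedy path-building sequence: start from `[u, v]`, and at each step prepend a common
neighbor of the current head and `v` which has not been used yet (if one exists). -/
noncomputable def cycleSeqList {V : Type*} [Fintype V] [DecidableEq V]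
    (F : SimpleGraph V) [DecidableRel F.Adj] (u v : V) : ℕ → List V
  | 0 => [u, v]
  | n + 1 =>
    let l := cycleSeqList F u v n
    if h : ((F.neighborFinset (l.headD v) ∩ F.neighborFinset v) \ l.toFinset).Nonempty
    then h.choose :: l else l

theorem cycleSeqList_spec {V : Type*} [Fintype V] [DecidableEq V]
    (r k : ℕ) (hr : 3 ≤ r) (hk : 3 ≤ k)
    (F : SimpleGraph V) [DecidableRel F.Adj] (u v : V) (huv : F.Adj u v)
    (htri : ∀ u v : V, F.Adj u v →
      r * k < (F.neighborFinset u ∩ F.neighborFinset v).card) :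
    ∀ n, n + 2 ≤ k →
      (cycleSeqList F u v n).length = n + 2 ∧ (cycleSeqList F u v n).Nodup ∧
      (cycleSeqList F u v n).Chain' F.Adj ∧
      F.Adj ((cycleSeqList F u v n).headD v) v ∧
      ∃ m, cycleSeqList F u v n = m ++ [v] := by
  intro n
  induction n with
  | zero =>
    intro _
    refine ⟨rfl, by simp [cycleSeqList, huv.ne], by simp [cycleSeqList, huv, List.Chain', List.isChain_pair], by simpa [cycleSeqList], ⟨[u], rfl⟩⟩
  | succ n ih =>
    intro hn
    obtain ⟨hlen, hnd, hch, hhead, m, hm⟩ := ih (by omega)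
    set l := cycleSeqList F u v n with hl
    have hlne : l ≠ [] := by
      intro h; rw [h] at hlen; simp at hlen
    -- the candidate set is nonempty
    have hcard : r * k < (F.neighborFinset (l.headD v) ∩ F.neighborFinset v).card :=
      htri _ _ hhead
    have htf : l.toFinset.card ≤ n + 2 := by
      calc l.toFinset.card ≤ l.length := l.toFinset_card_le
        _ = n + 2 := hlen
    have hSne : ((F.neighborFinset (l.headD v) ∩ F.neighborFinset v) \ l.toFinset).Nonempty := by
      rw [← Finset.card_pos]
      have h1 := Finset.le_card_sdiff l.toFinset
        (F.neighborFinset (l.headD v) ∩ F.neighborFinset v)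
      have hkrk : k ≤ r * k := Nat.le_mul_of_pos_left k (by omega)
      omega
    have hstep : cycleSeqList F u v (n + 1) = hSne.choose :: l := by
      rw [cycleSeqList]
      exact dif_pos hSne
    set w := hSne.choose with hw
    have hwmem := hSne.choose_spec
    rw [Finset.mem_sdiff, Finset.mem_inter] at hwmem
    obtain ⟨⟨hw1, hw2⟩, hw3⟩ := hwmem
    rw [SimpleGraph.mem_neighborFinset] at hw1 hw2
    rw [hstep]
    refine ⟨by simp [hlen], ?_, ?_, ?_, ⟨w :: m, by rw [hm]; rfl⟩⟩
    · refine List.nodup_cons.mpr ⟨fun hin => hw3 (List.mem_toFinset.mpr hin), hnd⟩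
    · refine List.isChain_cons.mpr ⟨?_, hch⟩
      intro y hy
      have : l.head? = some (l.headD v) := by
        rw [List.headD_eq_head?, List.head?_eq_head hlne]
        rfl
      rw [this] at hy
      rw [Option.mem_some_iff] at hy
      rw [← hy]
      exact hw1.symm
    · simpa using hw2.symm

/-- If every edge of a nonempty graph `F` lies in more than `r·k` triangles, then `F`
contains a cycle of length exactly `k`. -/
theorem cycle_of_many_triangles {V : Type*} [Fintype V] [DecidableEq V]
    (r k : ℕ) (hr : 3 ≤ r) (hk : 3 ≤ k)
    (F : SimpleGraph V) [DecidableRel F.Adj]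
    (hne : ∃ u v : V, F.Adj u v)
    (htri : ∀ u v : V, F.Adj u v →
      r * k < (F.neighborFinset u ∩ F.neighborFinset v).card) :
    ∃ x : ZMod k → V, Function.Injective x ∧ ∀ i, F.Adj (x i) (x (i + 1)) := by
  obtain ⟨u, v, huv⟩ := hne
  haveI : NeZero k := ⟨by omega⟩
  obtain ⟨hlen0, hnd0, hch0, hhead0, m, hm0⟩ :=
    cycleSeqList_spec r k hr hk F u v huv htri (k - 2) (by omega)
  set L0 := cycleSeqList F u v (k - 2) with hL0
  set L := L0.reverse with hLdef
  have hlen : L.length = k := by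
    rw [hLdef, List.length_reverse, hlen0]; omega
  have hnd : L.Nodup := by rw [hLdef, List.nodup_reverse]; exact hnd0
  have hch : L.Chain' F.Adj := by
    rw [hLdef, List.Chain', List.isChain_reverse]
    exact hch0.imp fun a b h => h.symm
  -- the first entry of L is v
  have hfirst : ∀ (h : 0 < L.length), L.get ⟨0, h⟩ = v := by
    intro h
    have : L = v :: m.reverse := by rw [hLdef, hm0]; simp
    simp [this]
  -- the last entry of L is adjacent to v
  have hlast : ∀ (h : k - 1 < L.length), F.Adj (L.get ⟨k - 1, h⟩) v := by
    intro h
    have h2 : L0.length - 1 - (k - 1) < L0.length := by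
      rw [hlen0]; omega
    have hL0ne : L0 ≠ [] := by rw [hm0]; simp
    show F.Adj (L0.reverse.get ⟨k - 1, h⟩) v
    rw [List.get_reverse' L0 ⟨k - 1, h⟩ h2]
    have hidx : L0.length - 1 - (k - 1) = 0 := by rw [hlen0]; omega
    simp only [hidx]
    rw [List.get_mk_zero]
    have heq : L0.headD v = L0.head hL0ne := by
      rw [List.headD_eq_head?, List.head?_eq_head hL0ne]; rfl
    rw [← heq]
    exact hhead0
  refine ⟨fun i => L.get ⟨i.val, by rw [hlen]; exact ZMod.val_lt i⟩, ?_, ?_⟩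
  · intro i j hij
    have := (hnd.get_inj_iff).mp hij
    have hval : i.val = j.val := by simpa using Fin.mk.inj_iff.mp this
    exact ZMod.val_injective k hval
  · intro i
    have hi : i.val < k := ZMod.val_lt i
    by_cases hcase : i.val + 1 < k
    · have hsucc : (i + 1).val = i.val + 1 := by
        have : (i + 1) = ((i.val + 1 : ℕ) : ZMod k) := by
          push_cast [ZMod.natCast_zmod_val]; ring
        rw [this, ZMod.val_cast_of_lt hcase]
      have := List.isChain_iff_getElem.mp hch i.val (by omega)
      convert this using 2
      all_goals simp [hsucc]
    · have hival : i.val = k - 1 := by omega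
      have hsucc : (i + 1).val = 0 := by
        have : (i + 1) = ((i.val + 1 : ℕ) : ZMod k) := by
          push_cast [ZMod.natCast_zmod_val]; ring
        rw [this, hival]
        have : (k - 1 + 1 : ℕ) = k := by omega
        rw [this, ZMod.natCast_self, ZMod.val_zero]
      have h0 : (0 : ℕ) < L.length := by rw [hlen]; omega
      have := hlast (by rw [hlen]; omega)
      replace this : F.Adj (L.get ⟨k - 1, by rw [hlen]; omega⟩) (L.get ⟨0, h0⟩) := by
        rw [hfirst h0]; exact this
      convert this using 2 <;> simp [hival, hsucc]
end

section
/- For all integers r ≥ 3 and k ≥ 3 there exists a constant c = c(r,k) > 0 (one may take c = ⌊k/2⌋·r^{r−1}/(r−1)!) with the following property: if G is an r-partite r-uniform hypergraph whose r parts each have size s and G has more than c·s^{r−1} edges, then G contains a loose k-cycle. -/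
section LooseCycleAux

lemma cleaning (K : ℕ) :
    ∀ (n : ℕ) (H : Finset (Finset ℕ)), H.card ≤ n →
    ∀ P : Finset (ℕ × ℕ),
      (∀ a b : ℕ, a ≠ b → (H.filter fun h => a ∈ h ∧ b ∈ h).Nonempty → (a, b) ∈ P) →
      ∃ H' : Finset (Finset ℕ), H' ⊆ H ∧
        (∀ a b : ℕ, a ≠ b →
          (H'.filter fun h => a ∈ h ∧ b ∈ h).card = 0 ∨
          K ≤ (H'.filter fun h => a ∈ h ∧ b ∈ h).card) ∧
        H.card ≤ H'.card + K * P.card := by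
  intro n
  induction n with
  | zero =>
    intro H hH P _
    refine ⟨H, subset_rfl, ?_, by omega⟩
    intro a b _
    left
    have : H = ∅ := Finset.card_eq_zero.mp (by omega)
    simp [this]
  | succ n ih =>
    intro H hH P hP
    by_cases hgood : ∀ a b : ℕ, a ≠ b →
        (H.filter fun h => a ∈ h ∧ b ∈ h).card = 0 ∨
        K ≤ (H.filter fun h => a ∈ h ∧ b ∈ h).card
    · exact ⟨H, subset_rfl, hgood, by omega⟩
    · push_neg at hgood
      obtain ⟨a, b, hab, hne0, hltK⟩ := hgood
      set H' := H.filter (fun h => ¬(a ∈ h ∧ b ∈ h)) with hH'def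
      have hcards : (H.filter fun h => a ∈ h ∧ b ∈ h).card + H'.card = H.card := by
        rw [hH'def]; exact Finset.card_filter_add_card_filter_not _
      have hsub : H' ⊆ H := Finset.filter_subset _ _
      have habP : (a, b) ∈ P := by
        apply hP a b hab
        exact Finset.card_pos.mp (by omega)
      have hP' : ∀ x y : ℕ, x ≠ y →
          (H'.filter fun h => x ∈ h ∧ y ∈ h).Nonempty → (x, y) ∈ P.erase (a, b) := by
        intro x y hxy ⟨h, hmem⟩
        simp only [Finset.mem_filter] at hmem
        obtain ⟨hh', hx, hy⟩ := hmem
        have hhH : h ∈ H := hsub hh'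
        refine Finset.mem_erase.mpr ⟨?_, hP x y hxy ⟨h, Finset.mem_filter.mpr ⟨hhH, hx, hy⟩⟩⟩
        intro heq
        have : (x, y) = (a, b) := heq
        have hxa : x = a := by injection this
        have hyb : y = b := by injection this
        subst hxa; subst hyb
        have : h ∈ H' := hh'
        rw [hH'def] at this
        simp only [Finset.mem_filter] at this
        exact this.2 ⟨hx, hy⟩
      have hcard' : H'.card ≤ n := by omega
      obtain ⟨H'', hsub'', hgood'', hbud''⟩ := ih H' hcard' (P.erase (a, b)) hP'
      refine ⟨H'', hsub''.trans hsub, hgood'', ?_⟩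
      have hPe : K * (P.erase (a, b)).card = K * (P.card - 1) := by
        rw [Finset.card_erase_of_mem habP]
      have hP1 : 1 ≤ P.card := Finset.card_pos.mpr ⟨(a, b), habP⟩
      have : K * (P.card - 1) + K = K * P.card := by
        have : P.card - 1 + 1 = P.card := by omega
        calc K * (P.card - 1) + K = K * (P.card - 1 + 1) := by ring
        _ = K * P.card := by rw [this]
      omega

lemma path_lemma (H : Finset (Finset ℕ)) (K k : ℕ)
    (hgood : ∀ a b : ℕ, a ≠ b → (H.filter fun h => a ∈ h ∧ b ∈ h).Nonempty →
      K ≤ (H.filter fun h => a ∈ h ∧ b ∈ h).card)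
    (hK : 2 ^ (k + 2) < K) :
    ∀ ℓ, 1 ≤ ℓ → ∀ (F : Finset ℕ) (a b : ℕ), a ≠ b → a ∉ F → b ∉ F →
      (H.filter fun h => a ∈ h ∧ b ∈ h).Nonempty →
      F.card + ℓ ≤ k + 1 →
      ∃ w : ℕ → ℕ, w 0 = a ∧ w ℓ = b ∧
        (∀ i ≤ ℓ, ∀ j ≤ ℓ, i ≠ j → w i ≠ w j) ∧
        (∀ i < ℓ, (H.filter fun h => w i ∈ h ∧ w (i + 1) ∈ h).Nonempty) ∧
        (∀ i ≤ ℓ, w i ∉ F) := by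
  intro ℓ
  induction ℓ with
  | zero => omega
  | succ n ih =>
    intro _ F a b hab haF hbF hco hcard
    by_cases hn : n = 0
    · subst hn
      refine ⟨fun i => if i = 0 then a else b, by simp, by simp, ?_, ?_, ?_⟩
      · intro i hi j hj hij
        interval_cases i <;> interval_cases j <;> simp_all <;> omega
      · intro i hi
        interval_cases i
        simpa using hco
      · intro i hi
        interval_cases i <;> simp_all
    · -- step case: n ≥ 1
      have hKle := hgood a b hab hco
      have hex : ∃ h ∈ H.filter (fun h => a ∈ h ∧ b ∈ h), ¬ h ⊆ F ∪ {a, b} := by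
        by_contra hcon
        push_neg at hcon
        have hsub : H.filter (fun h => a ∈ h ∧ b ∈ h) ⊆ (F ∪ {a, b}).powerset := by
          intro h hh
          exact Finset.mem_powerset.mpr (hcon h hh)
        have h1 := Finset.card_le_card hsub
        rw [Finset.card_powerset] at h1
        have h2 : (F ∪ {a, b}).card ≤ k + 2 := by
          have := Finset.card_union_le F ({a, b} : Finset ℕ)
          have h3 : ({a, b} : Finset ℕ).card ≤ 2 := Finset.card_insert_le _ _ |>.trans (by simp)
          omega
        have h4 : 2 ^ (F ∪ {a, b}).card ≤ 2 ^ (k + 2) := Nat.pow_le_pow_right (by norm_num) h2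
        omega
      obtain ⟨h, hhmem, hnsub⟩ := hex
      rw [Finset.mem_filter] at hhmem
      obtain ⟨hhH, hah, hbh⟩ := hhmem
      obtain ⟨c, hch, hcF⟩ := Finset.not_subset.mp hnsub
      simp only [Finset.mem_union, Finset.mem_insert, Finset.mem_singleton, not_or] at hcF
      obtain ⟨hcF, hca, hcb⟩ := hcF
      have hIH := ih (by omega) (insert b F) a c (fun e => hca e.symm)
        (by simp [haF, hab])
        (by simp [hcF, hcb])
        ⟨h, Finset.mem_filter.mpr ⟨hhH, hah, hch⟩⟩
        (by rw [Finset.card_insert_of_notMem hbF]; omega)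
      obtain ⟨w', hw0, hwn, hwinj, hwco, hwF⟩ := hIH
      have hbne : ∀ i ≤ n, w' i ≠ b := by
        intro i hi heq
        exact (hwF i hi) (by simp [heq])
      refine ⟨fun i => if i ≤ n then w' i else b, by simp [hw0], by simp, ?_, ?_, ?_⟩
      · intro i hi j hj hij
        by_cases h1 : i ≤ n <;> by_cases h2 : j ≤ n <;> simp only [h1, h2, if_pos, if_neg, if_true, if_false]
        · exact hwinj i h1 j h2 hij
        · exact hbne i h1
        · exact fun e => (hbne j h2) e.symm
        · omega
      · intro i hi
        by_cases h1 : i < n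
        · have e1 : i ≤ n := by omega
          have e2 : i + 1 ≤ n := by omega
          simpa only [e1, e2, if_true, if_pos] using hwco i h1
        · have hin : i = n := by omega
          have e1 : i ≤ n := by omega
          have e2 : ¬ (i + 1 ≤ n) := by omega
          simp only [e1, e2, if_true, if_false, if_pos, if_neg]
          refine ⟨h, Finset.mem_filter.mpr ⟨hhH, ?_, hbh⟩⟩
          rw [hin, hwn]; exact hch
      · intro i hi
        by_cases h1 : i ≤ n
        · simp only [h1, if_true, if_pos]
          intro hmem
          exact (hwF i h1) (by simp [hmem])
        · simp only [h1, if_false, if_neg]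
          exact hbF

lemma edge_eq_biUnion {r : ℕ} (V : Fin r → Finset ℕ) (G : Finset (Finset ℕ))
    (hdisj : ∀ i j, i ≠ j → Disjoint (V i) (V j))
    (hG : ∀ e ∈ G, e.card = r ∧ ∀ i, (e ∩ V i).card = 1)
    (e : Finset ℕ) (he : e ∈ G) :
    (Finset.univ.biUnion fun i => e ∩ V i) = e := by
  apply Finset.eq_of_subset_of_card_le
  · intro x hx
    rw [Finset.mem_biUnion] at hx
    obtain ⟨i, _, hxi⟩ := hx
    exact (Finset.mem_inter.mp hxi).1
  · have hbu : (Finset.univ.biUnion fun i => e ∩ V i).card = ∑ i, (e ∩ V i).card := by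
      apply Finset.card_biUnion
      intro i _ j _ hij
      exact ((hdisj i j hij).mono (Finset.inter_subset_right) (Finset.inter_subset_right))
    rw [hbu]
    have : ∑ i, (e ∩ V i).card = r := by
      rw [Finset.sum_congr rfl (fun i _ => (hG e he).2 i)]
      simp
    rw [this, (hG e he).1]

lemma count3 {r s : ℕ} (V : Fin r → Finset ℕ) (G : Finset (Finset ℕ))
    (hV : ∀ i, (V i).card = s)
    (hdisj : ∀ i j, i ≠ j → Disjoint (V i) (V j))
    (hG : ∀ e ∈ G, e.card = r ∧ ∀ i, (e ∩ V i).card = 1)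
    (a b w : ℕ) (hab : a ≠ b) (haw : a ≠ w) (hbw : b ≠ w) :
    (G.filter fun e => a ∈ e ∧ b ∈ e ∧ w ∈ e).card ≤ s ^ (r - 3) := by
  classical
  set A := G.filter fun e => a ∈ e ∧ b ∈ e ∧ w ∈ e with hA
  rcases A.eq_empty_or_nonempty with hemp | ⟨e₀, he₀⟩
  · simp [hemp]
  · rw [hA, Finset.mem_filter] at he₀
    obtain ⟨he₀G, hae, hbe, hwe⟩ := he₀
    have hpart : ∀ e ∈ G, ∀ x ∈ e, ∃ i, x ∈ V i := by
      intro e he x hx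
      rw [← edge_eq_biUnion V G hdisj hG e he, Finset.mem_biUnion] at hx
      obtain ⟨i, _, hxi⟩ := hx
      exact ⟨i, (Finset.mem_inter.mp hxi).2⟩
    obtain ⟨i₁, hi₁⟩ := hpart e₀ he₀G a hae
    obtain ⟨i₂, hi₂⟩ := hpart e₀ he₀G b hbe
    obtain ⟨i₃, hi₃⟩ := hpart e₀ he₀G w hwe
    -- the three parts are distinct
    have hdist : ∀ (x y : ℕ) (i : Fin r), x ≠ y → x ∈ V i → y ∈ V i →
        ∀ e ∈ G, x ∈ e → y ∈ e → False := by
      intro x y i hxy hxV hyV e he hxe hye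
      have hsub : ({x, y} : Finset ℕ) ⊆ e ∩ V i := by
        intro z hz
        rw [Finset.mem_insert, Finset.mem_singleton] at hz
        rcases hz with rfl | rfl <;> exact Finset.mem_inter.mpr ⟨by assumption, by assumption⟩
      have h2 : ({x, y} : Finset ℕ).card = 2 := Finset.card_pair hxy
      have := Finset.card_le_card hsub
      rw [h2, (hG e he).2 i] at this
      omega
    have h12 : i₁ ≠ i₂ := fun heq => hdist a b i₁ hab hi₁ (heq ▸ hi₂) e₀ he₀G hae hbe
    have h13 : i₁ ≠ i₃ := fun heq => hdist a w i₁ haw hi₁ (heq ▸ hi₃) e₀ he₀G hae hwe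
    have h23 : i₂ ≠ i₃ := fun heq => hdist b w i₂ hbw hi₂ (heq ▸ hi₃) e₀ he₀G hbe hwe
    have h21 : i₂ ≠ i₁ := Ne.symm h12
    have h31 : i₃ ≠ i₁ := Ne.symm h13
    have h32 : i₃ ≠ i₂ := Ne.symm h23
    -- the selection function
    set f : Finset ℕ → (Fin r → ℕ) := fun e i => ((e ∩ V i).min).getD 0 with hf
    have hfe : ∀ e ∈ G, ∀ i, e ∩ V i = {f e i} := by
      intro e he i
      obtain ⟨y, hy⟩ := Finset.card_eq_one.mp ((hG e he).2 i)
      have hfy : f e i = y := by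
        simp only [hf, hy, Finset.min_singleton]
        rfl
      rw [hy, hfy]
    have hfmem : ∀ e ∈ G, ∀ i, f e i ∈ e ∧ f e i ∈ V i := by
      intro e he i
      have := hfe e he i
      have hm : f e i ∈ e ∩ V i := by rw [this]; exact Finset.mem_singleton_self _
      exact Finset.mem_inter.mp hm
    have hfuniq : ∀ e ∈ G, ∀ i, ∀ x, x ∈ e → x ∈ V i → x = f e i := by
      intro e he i x hxe hxV
      have : x ∈ e ∩ V i := Finset.mem_inter.mpr ⟨hxe, hxV⟩
      rw [hfe e he i, Finset.mem_singleton] at this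
      exact this
    set t : Fin r → Finset ℕ := fun i =>
      if i = i₁ then {a} else if i = i₂ then {b} else if i = i₃ then {w} else V i with ht
    have hmaps : ∀ e ∈ A, f e ∈ Fintype.piFinset t := by
      intro e he
      rw [hA, Finset.mem_filter] at he
      obtain ⟨heG, hae', hbe', hwe'⟩ := he
      rw [Fintype.mem_piFinset]
      intro i
      by_cases e1 : i = i₁
      · have hx := (hfuniq e heG i₁ a hae' hi₁).symm
        simp [ht, e1, hx]
      · by_cases e2 : i = i₂
        · have hx := (hfuniq e heG i₂ b hbe' hi₂).symm
          simp [ht, e1, e2, h21, hx]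
        · by_cases e3 : i = i₃
          · have hx := (hfuniq e heG i₃ w hwe' hi₃).symm
            simp [ht, e1, e2, e3, h31, h32, hx]
          · have hx := (hfmem e heG i).2
            simp [ht, e1, e2, e3, hx]
    have hext : ∀ e ∈ G, ∀ e' ∈ G, f e = f e' → e ⊆ e' := by
      intro e heG e' he'G heq x hx
      obtain ⟨i, hxi⟩ := hpart e heG x hx
      have hx' : x = f e i := hfuniq e heG i x hx hxi
      rw [hx', congrFun heq i]
      exact (hfmem e' he'G i).1
    have hinj : Set.InjOn f (A : Set (Finset ℕ)) := by
      intro e he e' he' heq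
      simp only [Finset.coe_filter, Set.mem_setOf_eq, hA] at he he'
      exact Finset.Subset.antisymm (hext e he.1 e' he'.1 heq) (hext e' he'.1 e he.1 heq.symm)
    have hcard := Finset.card_le_card_of_injOn f (fun e he => hmaps e he) hinj
    have hDcard : (Fintype.piFinset t).card = ∏ i, (t i).card := Fintype.card_piFinset t
    set S : Finset (Fin r) := {i₁, i₂, i₃} with hS
    have hm1 : i₁ ∈ S := by simp [hS]
    have hm2 : i₂ ∈ S := by simp [hS]
    have hm3 : i₃ ∈ S := by simp [hS]
    have hScard : S.card = 3 := by
      rw [hS]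
      rw [Finset.card_insert_of_notMem (by simp [h12, h13]),
          Finset.card_insert_of_notMem (by simp [h23]), Finset.card_singleton]
    have hle : ∀ i, (t i).card ≤ (if i ∈ S then 1 else s) := by
      intro i
      by_cases e1 : i = i₁
      · simp [ht, e1, hm1]
      · by_cases e2 : i = i₂
        · simp [ht, e1, e2, h21, hm2]
        · by_cases e3 : i = i₃
          · simp [ht, e1, e2, e3, h31, h32, hm3]
          · have hiS : i ∉ S := by simp [hS, e1, e2, e3]
            simp [hiS, ht, e1, e2, e3, hV i]
    have hprod : ∏ i, (t i).card ≤ ∏ i, (if i ∈ S then 1 else s) :=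
      Finset.prod_le_prod' (fun i _ => hle i)
    have hprodeq : ∏ i, (if i ∈ S then 1 else s) = s ^ (r - 3) := by
      rw [Finset.prod_ite (fun _ => (1 : ℕ)) (fun _ => s)]
      rw [Finset.prod_const, Finset.prod_const, one_pow, one_mul]
      congr 1
      have hcompl : Finset.univ.filter (fun i => ¬ i ∈ S) = Sᶜ := by
        ext i; simp
      rw [hcompl, Finset.card_compl, hScard, Fintype.card_fin]
    calc A.card ≤ (Fintype.piFinset t).card := hcard
      _ = ∏ i, (t i).card := hDcard
      _ ≤ ∏ i, (if i ∈ S then 1 else s) := hprod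
      _ = s ^ (r - 3) := hprodeq

lemma lift_cycle (r s k : ℕ) (hr : 3 ≤ r) (hk : 3 ≤ k) (hs : 1 ≤ s)
    (V : Fin r → Finset ℕ) (G H : Finset (Finset ℕ)) (hHG : H ⊆ G)
    (hV : ∀ i, (V i).card = s)
    (hdisj : ∀ i j, i ≠ j → Disjoint (V i) (V j))
    (hG : ∀ e ∈ G, e.card = r ∧ ∀ i, (e ∩ V i).card = 1)
    (K : ℕ) (hKbig : k * (r + 1) * s ^ (r - 3) < K)
    (hgood : ∀ a b : ℕ, a ≠ b → (H.filter fun h => a ∈ h ∧ b ∈ h).Nonempty →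
      K ≤ (H.filter fun h => a ∈ h ∧ b ∈ h).card)
    (myv : ZMod k → ℕ) (hinj : Function.Injective myv)
    (hco : ∀ i : ZMod k, (H.filter fun h => myv i ∈ h ∧ myv (i + 1) ∈ h).Nonempty) :
    HasLooseCycle k G := by
  classical
  haveI : NeZero k := ⟨by omega⟩
  haveI : Fact (1 < k) := ⟨by omega⟩
  have hcast : ∀ i : ZMod k, ((i.val : ℕ) : ZMod k) = i := fun i => ZMod.natCast_rightInverse i
  have hone : (1 : ZMod k) ≠ 0 := one_ne_zero
  have hne01 : ∀ i : ZMod k, i ≠ i + 1 := by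
    intro i h
    exact hone (left_eq_add.mp h)
  have htwo : (1 + 1 : ZMod k) ≠ 0 := by
    have h2 : ((2 : ℕ) : ZMod k) = (1 + 1 : ZMod k) := by push_cast; ring
    rw [← h2]
    intro h
    have := congrArg ZMod.val h
    rw [ZMod.val_natCast, ZMod.val_zero, Nat.mod_eq_of_lt (by omega)] at this
    omega
  have hne02 : ∀ i : ZMod k, i ≠ i + 1 + 1 := by
    intro i h
    rw [add_assoc] at h
    exact htwo (left_eq_add.mp h)
  set VSET : Finset ℕ := Finset.univ.image myv with hVSET
  have hVmem : ∀ i : ZMod k, myv i ∈ VSET := fun i => Finset.mem_image_of_mem myv (Finset.mem_univ i)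
  -- build the edges
  have build : ∀ t, t ≤ k → ∃ E : ℕ → Finset ℕ,
      ∀ i, i < t →
        (E i ∈ H ∧ myv (i : ZMod k) ∈ E i ∧ myv ((i : ZMod k) + 1) ∈ E i ∧
          E i ∩ VSET ⊆ {myv (i : ZMod k), myv ((i : ZMod k) + 1)}) ∧
        ∀ j, j < i → E i ∩ E j ⊆ VSET := by
    intro t
    induction t with
    | zero => exact fun _ => ⟨fun _ => ∅, fun i hi => absurd hi (by omega)⟩
    | succ t ih =>
      intro ht
      obtain ⟨E, hE⟩ := ih (by omega)
      set p₁ := myv (t : ZMod k) with hp₁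
      set p₂ := myv ((t : ZMod k) + 1) with hp₂
      have hp12 : p₁ ≠ p₂ := fun h => (hne01 _) (hinj h)
      set W : Finset ℕ := (VSET ∪ (Finset.range t).biUnion E) \ {p₁, p₂} with hW
      have hWcard : W.card ≤ k + k * r := by
        have h0 : W.card ≤ (VSET ∪ (Finset.range t).biUnion E).card :=
          Finset.card_le_card (Finset.sdiff_subset)
        have h0' : (VSET ∪ (Finset.range t).biUnion E).card ≤
            VSET.card + ((Finset.range t).biUnion E).card := Finset.card_union_le _ _
        have h1 : VSET.card ≤ k := by
          calc VSET.card ≤ Finset.univ.card := Finset.card_image_le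
          _ = k := by rw [Finset.card_univ, ZMod.card]
        have h2 : ((Finset.range t).biUnion E).card ≤ ∑ j ∈ Finset.range t, (E j).card :=
          Finset.card_biUnion_le
        have h3 : ∑ j ∈ Finset.range t, (E j).card ≤ ∑ _j ∈ Finset.range t, r := by
          apply Finset.sum_le_sum
          intro j hj
          rw [Finset.mem_range] at hj
          exact le_of_eq (hG _ (hHG ((hE j (by omega)).1.1))).1
        have h4 : ∑ _j ∈ Finset.range t, r = t * r := by
          rw [Finset.sum_const, Finset.card_range, smul_eq_mul]
        have h5 : t * r ≤ k * r := Nat.mul_le_mul_right r (by omega)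
        omega
      have hA : K ≤ (H.filter fun h => p₁ ∈ h ∧ p₂ ∈ h).card := hgood _ _ hp12 (hco _)
      have hexists : ∃ h ∈ H.filter (fun h => p₁ ∈ h ∧ p₂ ∈ h), Disjoint h W := by
        by_contra hcon
        push_neg at hcon
        have hsub : H.filter (fun h => p₁ ∈ h ∧ p₂ ∈ h) ⊆
            W.biUnion (fun x => G.filter fun e => p₁ ∈ e ∧ p₂ ∈ e ∧ x ∈ e) := by
          intro h hh
          have hndis := hcon h hh
          rw [Finset.mem_filter] at hh
          rw [Finset.not_disjoint_iff] at hndis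
          obtain ⟨x, hxh, hxW⟩ := hndis
          exact Finset.mem_biUnion.mpr
            ⟨x, hxW, Finset.mem_filter.mpr ⟨hHG hh.1, hh.2.1, hh.2.2, hxh⟩⟩
        have hcard := (Finset.card_le_card hsub).trans Finset.card_biUnion_le
        have hsum : ∑ x ∈ W, (G.filter fun e => p₁ ∈ e ∧ p₂ ∈ e ∧ x ∈ e).card ≤
            ∑ _x ∈ W, s ^ (r - 3) := by
          apply Finset.sum_le_sum
          intro x hxW
          rw [hW, Finset.mem_sdiff] at hxW
          have hx1 : p₁ ≠ x := fun h => hxW.2 (by rw [← h]; simp)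
          have hx2 : p₂ ≠ x := fun h => hxW.2 (by rw [← h]; simp)
          exact count3 V G hV hdisj hG p₁ p₂ x hp12 hx1 hx2
        rw [Finset.sum_const, smul_eq_mul] at hsum
        have hKle : K ≤ W.card * s ^ (r - 3) := le_trans hA (hcard.trans hsum)
        have hfin : W.card * s ^ (r - 3) ≤ (k + k * r) * s ^ (r - 3) :=
          Nat.mul_le_mul_right _ hWcard
        have heq : (k + k * r) * s ^ (r - 3) = k * (r + 1) * s ^ (r - 3) := by ring
        omega
      obtain ⟨h, hh, hdisjW⟩ := hexists
      rw [Finset.mem_filter] at hh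
      refine ⟨Function.update E t h, ?_⟩
      intro i hi
      by_cases hit : i = t
      · rw [hit, Function.update_self]
        refine ⟨⟨hh.1, hh.2.1, hh.2.2, ?_⟩, ?_⟩
        · intro x hx
          rw [Finset.mem_inter] at hx
          by_cases hxp : x ∈ ({p₁, p₂} : Finset ℕ)
          · simpa [hp₁, hp₂] using hxp
          · exfalso
            have hxW : x ∈ W := Finset.mem_sdiff.mpr ⟨Finset.mem_union_left _ hx.2, hxp⟩
            exact (Finset.disjoint_left.mp hdisjW) hx.1 hxW
        · intro j hj
          have hjt : j ≠ t := by omega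
          rw [Function.update_of_ne hjt]
          intro x hx
          rw [Finset.mem_inter] at hx
          by_cases hxp : x ∈ ({p₁, p₂} : Finset ℕ)
          · rcases Finset.mem_insert.mp hxp with rfl | hxp2
            · exact hVmem _
            · rw [Finset.mem_singleton] at hxp2
              rw [hxp2, hp₂]
              exact hVmem _
          · exfalso
            have hxW : x ∈ W := Finset.mem_sdiff.mpr
              ⟨Finset.mem_union_right _
                (Finset.mem_biUnion.mpr ⟨j, Finset.mem_range.mpr (by omega), hx.2⟩), hxp⟩
            exact (Finset.disjoint_left.mp hdisjW) hx.1 hxW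
      · have hi' : i < t := by omega
        obtain ⟨⟨c1, c2, c3, c4⟩, c5⟩ := hE i hi'
        rw [Function.update_of_ne hit]
        refine ⟨⟨c1, c2, c3, c4⟩, ?_⟩
        intro j hj
        have hjt : j ≠ t := by omega
        rw [Function.update_of_ne hjt]
        exact c5 j hj
  obtain ⟨E, hE⟩ := build k le_rfl
  set e : ZMod k → Finset ℕ := fun i => E i.val with he
  have hprop : ∀ i : ZMod k, E i.val ∈ H ∧ myv i ∈ E i.val ∧ myv (i + 1) ∈ E i.val ∧
      E i.val ∩ VSET ⊆ {myv i, myv (i + 1)} := by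
    intro i
    have h0 := (hE i.val (ZMod.val_lt i)).1
    rw [hcast i] at h0
    exact h0
  have hcross : ∀ i j : ZMod k, i ≠ j → e i ∩ e j ⊆ VSET := by
    intro i j hij
    have hvij : i.val ≠ j.val := fun h => hij (by rw [← hcast i, ← hcast j, h])
    rcases lt_or_gt_of_ne hvij with h | h
    · have h0 := (hE j.val (ZMod.val_lt j)).2 i.val h
      rw [he]
      simp only
      rw [Finset.inter_comm]
      exact h0
    · exact (hE i.val (ZMod.val_lt i)).2 j.val h
  have hpair : ∀ i j : ZMod k, i ≠ j →
      e i ∩ e j ⊆ {myv i, myv (i + 1)} ∩ {myv j, myv (j + 1)} := by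
    intro i j hij x hx
    rw [Finset.mem_inter] at hx
    have hxV : x ∈ VSET := hcross i j hij (Finset.mem_inter.mpr hx)
    rw [Finset.mem_inter]
    exact ⟨(hprop i).2.2.2 (Finset.mem_inter.mpr ⟨hx.1, hxV⟩),
           (hprop j).2.2.2 (Finset.mem_inter.mpr ⟨hx.2, hxV⟩)⟩
  refine ⟨e, fun i => myv (i + 1), ?_, ?_, ?_, ?_, ?_⟩
  · -- e injective
    intro i j heq
    by_contra hne
    have hsub : e i ⊆ {myv i, myv (i + 1)} := by
      intro x hx
      have hx2 : x ∈ e i ∩ e j := Finset.mem_inter.mpr ⟨hx, heq ▸ hx⟩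
      exact (Finset.mem_inter.mp (hpair i j hne hx2)).1
    have hc1 := Finset.card_le_card hsub
    have hc2 : ({myv i, myv (i + 1)} : Finset ℕ).card ≤ 2 :=
      (Finset.card_insert_le _ _).trans (by simp)
    have hc3 : (e i).card = r := (hG _ (hHG (hprop i).1)).1
    omega
  · -- v injective
    intro i j heq
    have := hinj heq
    exact add_right_cancel this
  · exact fun i => hHG (hprop i).1
  · -- consecutive intersections
    intro i
    apply Finset.Subset.antisymm
    · intro x hx
      have hp := hpair i (i + 1) (hne01 i) hx
      rw [Finset.mem_inter] at hp
      rcases Finset.mem_insert.mp hp.1 with rfl | h1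
      · exfalso
        rcases Finset.mem_insert.mp hp.2 with h2 | h2
        · exact hne01 i (hinj h2)
        · rw [Finset.mem_singleton] at h2
          exact hne02 i (hinj h2)
      · rw [Finset.mem_singleton] at h1
        rw [h1]
        exact Finset.mem_singleton_self _
    · intro x hx
      rw [Finset.mem_singleton] at hx
      rw [hx]
      exact Finset.mem_inter.mpr ⟨(hprop i).2.2.1, (hprop (i + 1)).2.1⟩
  · -- non-consecutive
    intro i j h1 h2 h3
    rw [Finset.eq_empty_iff_forall_notMem]
    intro x hx
    have hp := hpair i j (fun h => h1 h.symm) hx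
    rw [Finset.mem_inter] at hp
    rcases Finset.mem_insert.mp hp.1 with rfl | hx1
    · rcases Finset.mem_insert.mp hp.2 with hc | hc
      · exact h1 (hinj hc).symm
      · rw [Finset.mem_singleton] at hc
        exact h3 (hinj hc)
    · rw [Finset.mem_singleton] at hx1
      rw [hx1] at hp
      rcases Finset.mem_insert.mp hp.2 with hc | hc
      · exact h2 (hinj hc).symm
      · rw [Finset.mem_singleton] at hc
        exact h1 (add_right_cancel (hinj hc)).symm

end LooseCycleAux

/-- For `r, k ≥ 3` there is `c > 0` (one may take `c = ⌊k/2⌋·r^(r-1)/(r-1)!`) such that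
every `r`-partite `r`-graph with parts of size `s` and more than `c·s^(r-1)` edges
contains a loose `k`-cycle. -/
theorem partite_turan_loose_cycle (r k : ℕ) (hr : 3 ≤ r) (hk : 3 ≤ k) :
    ∃ c : ℝ, 0 < c ∧
      ∀ (s : ℕ) (V : Fin r → Finset ℕ) (G : Finset (Finset ℕ)),
        (∀ i, (V i).card = s) →
        (∀ i j, i ≠ j → Disjoint (V i) (V j)) →
        (∀ e ∈ G, e.card = r ∧ ∀ i, (e ∩ V i).card = 1) →
        c * (s : ℝ) ^ (r - 1) < (G.card : ℝ) →
        HasLooseCycle k G := by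
  classical
  haveI : NeZero k := ⟨by omega⟩
  haveI : Fact (1 < k) := ⟨by omega⟩
  set N : ℕ := r ^ 2 * (k * (r + 1) + 2 ^ (k + 2) + 1) with hN
  refine ⟨(N : ℝ) + 1, by positivity, ?_⟩
  intro s V G hV hdisj hG hbig
  have hbigN : (N + 1) * s ^ (r - 1) < G.card := by
    have hcast : (((N + 1) * s ^ (r - 1) : ℕ) : ℝ) = ((N : ℝ) + 1) * (s : ℝ) ^ (r - 1) := by
      push_cast
      ring
    have := hcast ▸ hbig
    exact_mod_cast this
  have hs : 1 ≤ s := by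
    by_contra hcon
    have hs0 : s = 0 := by omega
    have hG0 : 0 < G.card := by
      have h1 : s ^ (r - 1) = 0 := by
        rw [hs0]
        exact zero_pow (by omega)
      omega
    obtain ⟨e, he⟩ := Finset.card_pos.mp hG0
    have h1 := (hG e he).2 ⟨0, by omega⟩
    have h2 : V ⟨0, by omega⟩ = ∅ := Finset.card_eq_zero.mp (by rw [hV]; exact hs0)
    rw [h2] at h1
    simp at h1
  set K : ℕ := k * (r + 1) * s ^ (r - 3) + 2 ^ (k + 2) + 1 with hK
  set U : Finset ℕ := Finset.univ.biUnion V with hU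
  set P : Finset (ℕ × ℕ) := U ×ˢ U with hP
  have hedgecover : ∀ e ∈ G, ∀ x ∈ e, x ∈ U := by
    intro e he x hx
    rw [← edge_eq_biUnion V G hdisj hG e he, Finset.mem_biUnion] at hx
    obtain ⟨i, _, hxi⟩ := hx
    rw [hU]
    exact Finset.mem_biUnion.mpr ⟨i, Finset.mem_univ i, (Finset.mem_inter.mp hxi).2⟩
  have hPprop : ∀ a b : ℕ, a ≠ b → (G.filter fun h => a ∈ h ∧ b ∈ h).Nonempty →
      (a, b) ∈ P := by
    intro a b _ hne
    obtain ⟨h, hm⟩ := hne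
    rw [Finset.mem_filter] at hm
    rw [hP]
    exact Finset.mem_product.mpr ⟨hedgecover h hm.1 a hm.2.1, hedgecover h hm.1 b hm.2.2⟩
  obtain ⟨H, hHG, hHgood, hHbud⟩ := cleaning K G.card G le_rfl P hPprop
  have hUcard : U.card ≤ r * s := by
    calc U.card ≤ ∑ i, (V i).card := Finset.card_biUnion_le
    _ = r * s := by
        rw [Finset.sum_congr rfl fun i _ => hV i, Finset.sum_const, Finset.card_univ,
          Fintype.card_fin, smul_eq_mul]
  have hPcard : P.card ≤ r * s * (r * s) := by
    rw [hP, Finset.card_product]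
    exact Nat.mul_le_mul hUcard hUcard
  have hKP : K * P.card ≤ N * s ^ (r - 1) := by
    have hsplit : s ^ (r - 3) * s ^ 2 = s ^ (r - 1) := by
      rw [← pow_add]
      congr 1
      omega
    have hs2 : s ^ 2 ≤ s ^ (r - 1) := Nat.pow_le_pow_right hs (by omega)
    calc K * P.card ≤ K * (r * s * (r * s)) := Nat.mul_le_mul_left K hPcard
    _ = k * (r + 1) * r ^ 2 * (s ^ (r - 3) * s ^ 2) + (2 ^ (k + 2) + 1) * r ^ 2 * s ^ 2 := by
        rw [hK]; ring
    _ = k * (r + 1) * r ^ 2 * s ^ (r - 1) + (2 ^ (k + 2) + 1) * r ^ 2 * s ^ 2 := by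
        rw [hsplit]
    _ ≤ k * (r + 1) * r ^ 2 * s ^ (r - 1) + (2 ^ (k + 2) + 1) * r ^ 2 * s ^ (r - 1) := by
        exact Nat.add_le_add_left (Nat.mul_le_mul_left _ hs2) _
    _ = N * s ^ (r - 1) := by rw [hN]; ring
  have hHne : H.Nonempty := by
    rw [← Finset.card_pos]
    by_contra hcon
    push_neg at hcon
    have h0 : H.card = 0 := by omega
    have hb : G.card ≤ N * s ^ (r - 1) := le_trans (by omega) hKP
    have h2 : N * s ^ (r - 1) ≤ (N + 1) * s ^ (r - 1) :=
      Nat.mul_le_mul_right _ (by omega)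
    omega
  have hHgoodK : ∀ a b : ℕ, a ≠ b → (H.filter fun h => a ∈ h ∧ b ∈ h).Nonempty →
      K ≤ (H.filter fun h => a ∈ h ∧ b ∈ h).card := by
    intro a b hab hne
    rcases hHgood a b hab with h | h
    · exfalso
      have := Finset.card_pos.mpr hne
      omega
    · exact h
  obtain ⟨h₀, hh₀⟩ := hHne
  have hh₀G : h₀ ∈ G := hHG hh₀
  have hcard₀ : 1 < h₀.card := by rw [(hG h₀ hh₀G).1]; omega
  obtain ⟨a, ha, b, hb, hab⟩ := Finset.one_lt_card.mp hcard₀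
  obtain ⟨w, hw0, hwl, hwinj, hwco, _⟩ := path_lemma H K k hHgoodK (by omega) (k - 1)
    (by omega) ∅ a b hab (Finset.notMem_empty a) (Finset.notMem_empty b)
    ⟨h₀, Finset.mem_filter.mpr ⟨hh₀, ha, hb⟩⟩ (by simp only [Finset.card_empty]; omega)
  have hcast : ∀ i : ZMod k, ((i.val : ℕ) : ZMod k) = i := fun i => ZMod.natCast_rightInverse i
  set myv : ZMod k → ℕ := fun i => w i.val with hmyv
  have hvle : ∀ i : ZMod k, i.val ≤ k - 1 := fun i => by have := ZMod.val_lt i; omega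
  have hmyinj : Function.Injective myv := by
    intro i j h
    by_contra hne
    have hvne : i.val ≠ j.val := fun hv => hne (by rw [← hcast i, ← hcast j, hv])
    exact (hwinj i.val (hvle i) j.val (hvle j) hvne) h
  have hvadd : ∀ i : ZMod k, (i + 1).val = (i.val + 1) % k := by
    intro i
    rw [ZMod.val_add, ZMod.val_one]
  have hmyco : ∀ i : ZMod k, (H.filter fun h => myv i ∈ h ∧ myv (i + 1) ∈ h).Nonempty := by
    intro i
    by_cases hi : i.val = k - 1
    · have h1 : (i + 1).val = 0 := by
        rw [hvadd, hi]
        have hkk : k - 1 + 1 = k := by omega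
        rw [hkk, Nat.mod_self]
      have h2 : myv i = b := by rw [hmyv]; simp only; rw [hi, hwl]
      have h3 : myv (i + 1) = a := by rw [hmyv]; simp only; rw [h1, hw0]
      rw [h2, h3]
      exact ⟨h₀, Finset.mem_filter.mpr ⟨hh₀, hb, ha⟩⟩
    · have hlt : i.val < k - 1 := by have := ZMod.val_lt i; omega
      have h1 : (i + 1).val = i.val + 1 := by
        rw [hvadd]
        exact Nat.mod_eq_of_lt (by omega)
      have h2 := hwco i.val hlt
      simp only [hmyv, h1]
      exact h2
  exact lift_cycle r s k hr hk hs V G H hHG hV hdisj hG K (by rw [hK]; exact Nat.lt_succ_of_le (Nat.le_add_right _ _)) hHgoodK myv hmyinj hmyco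
end

section
/- Let h ≥ 1 be an integer. Every nonempty graph with minimum degree at least h+1 contains a cycle whose length is congruent to 2 modulo h. -/
open SimpleGraph

private lemma getVert_injOn' {V : Type*} {G : SimpleGraph V} {u v : V}
    (p : G.Walk u v) (hp : p.IsPath) :
    ∀ i ≤ p.length, ∀ j ≤ p.length, p.getVert i = p.getVert j → i = j := by
  induction p with
  | nil =>
    intro i hi j hj _
    simp only [Walk.length_nil, Nat.le_zero] at hi hj
    omega
  | cons hadj q ih =>
    rw [Walk.cons_isPath_iff] at hp
    intro i hi j hj hij
    match i, j with
    | 0, 0 => rfl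
    | 0, (j+1) =>
      exfalso
      apply hp.2
      rw [Walk.getVert_zero, Walk.getVert_cons_succ] at hij
      rw [Walk.mem_support_iff_exists_getVert]
      exact ⟨j, hij.symm, by simpa using hj⟩
    | (i+1), 0 =>
      exfalso
      apply hp.2
      rw [Walk.getVert_zero, Walk.getVert_cons_succ] at hij
      rw [Walk.mem_support_iff_exists_getVert]
      exact ⟨i, hij, by simpa using hi⟩
    | (i+1), (j+1) =>
      rw [Walk.getVert_cons_succ, Walk.getVert_cons_succ] at hij
      have := ih hp.1 i (by simpa using hi) j (by simpa using hj) hij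
      omega

/-- Every nonempty graph with minimum degree at least `h+1` contains a cycle whose
length is congruent to `2` modulo `h`. -/
theorem cycle_two_mod_h_of_min_degree {V : Type*} [Fintype V] [Nonempty V]
    (h : ℕ) (hh : 1 ≤ h)
    (F : SimpleGraph V) [DecidableRel F.Adj]
    (hdeg : ∀ v : V, h + 1 ≤ F.degree v) :
    ∃ m : ℕ, 3 ≤ m ∧ m % h = 2 % h ∧
      ∃ x : ZMod m → V, Function.Injective x ∧ ∀ i, F.Adj (x i) (x (i + 1)) := by
  classical
  -- take a path of maximal length
  set P : ℕ → Prop := fun n => ∃ (u v : V) (p : F.Walk u v), p.IsPath ∧ p.length = n with hP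
  have hP0 : P 0 := by
    obtain ⟨v⟩ := (inferInstance : Nonempty V)
    exact ⟨v, v, Walk.nil, Walk.IsPath.nil, rfl⟩
  set N := Nat.findGreatest P (Fintype.card V) with hN
  obtain ⟨u, v, p, hp, hplen⟩ : P N :=
    Nat.findGreatest_spec (Nat.zero_le _) hP0
  -- all neighbors of u lie on p
  have hnbr : ∀ w, F.Adj u w → w ∈ p.support := by
    intro w hw
    by_contra hws
    have hcons : (Walk.cons hw.symm p).IsPath := hp.cons hws
    have hlt : N < (Walk.cons hw.symm p).length := by
      simp [hplen]
    have hle : (Walk.cons hw.symm p).length ≤ Fintype.card V := by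
      have := hcons.length_lt
      omega
    exact Nat.findGreatest_is_greatest hlt hle
      ⟨w, v, Walk.cons hw.symm p, hcons, rfl⟩
  -- index of each neighbor on the path
  have hidx : ∀ w : F.neighborFinset u, ∃ n, p.getVert n = w ∧ n ≤ p.length := by
    intro ⟨w, hw⟩
    rw [mem_neighborFinset] at hw
    exact Walk.mem_support_iff_exists_getVert.mp (hnbr w hw)
  choose idx hidx1 hidx2 using hidx
  -- pigeonhole: two neighbors with indices congruent mod h
  have hcard : Fintype.card (Fin h) < Fintype.card (F.neighborFinset u) := by
    rw [Fintype.card_fin, Fintype.card_coe, F.card_neighborFinset_eq_degree]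
    have := hdeg u
    omega
  obtain ⟨w1, w2, hne, heq⟩ := Fintype.exists_ne_map_eq_of_card_lt
    (fun w : F.neighborFinset u => (⟨idx w % h, Nat.mod_lt _ hh⟩ : Fin h)) hcard
  have hmod : idx w1 % h = idx w2 % h := by simpa using congrArg Fin.val heq
  have hidxne : idx w1 ≠ idx w2 := by
    intro hcontra
    apply hne
    have : p.getVert (idx w1) = p.getVert (idx w2) := by rw [hcontra]
    rw [hidx1 w1, hidx1 w2] at this
    exact Subtype.ext this
  -- wlog idx w1 < idx w2; set a < b
  obtain ⟨z1, z2, hab, habmod⟩ : ∃ z1 z2 : F.neighborFinset u,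
      idx z1 < idx z2 ∧ idx z1 % h = idx z2 % h := by
    rcases lt_or_gt_of_ne hidxne with hlt | hgt
    · exact ⟨w1, w2, hlt, hmod⟩
    · exact ⟨w2, w1, hgt, hmod.symm⟩
  set a := idx z1 with ha
  set b := idx z2 with hb
  have hadj1 : F.Adj u (p.getVert a) := by
    rw [hidx1 z1]; exact (mem_neighborFinset F u z1).mp z1.2
  have hadj2 : F.Adj u (p.getVert b) := by
    rw [hidx1 z2]; exact (mem_neighborFinset F u z2).mp z2.2
  have hble : b ≤ p.length := hidx2 z2
  have ha1 : 1 ≤ a := by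
    by_contra hcon
    have ha0 : a = 0 := by omega
    have : p.getVert a = u := by rw [ha0, Walk.getVert_zero]
    rw [this] at hadj1
    exact F.irrefl hadj1
  have hinj := getVert_injOn' p hp
  -- build the cycle
  refine ⟨b - a + 2, by omega, ?_, ?_⟩
  · obtain ⟨k, hk⟩ : h ∣ (b - a) :=
      Nat.dvd_of_mod_eq_zero (Nat.sub_mod_eq_zero_of_mod_eq habmod.symm)
    rw [hk, Nat.mul_add_mod]
  · set m := b - a + 2 with hm
    have hm3 : 3 ≤ m := by omega
    have : NeZero m := ⟨by omega⟩
    refine ⟨fun i : ZMod m => if i.val = 0 then u else p.getVert (a + i.val - 1), ?_, ?_⟩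
    · intro i j hij
      have hvi := ZMod.val_lt i
      have hvj := ZMod.val_lt j
      apply ZMod.val_injective m
      simp only at hij
      by_cases hi0 : i.val = 0 <;> by_cases hj0 : j.val = 0
      · omega
      · exfalso
        rw [if_pos hi0, if_neg hj0] at hij
        have := hinj 0 (Nat.zero_le _) (a + j.val - 1) (by omega)
          (by rw [Walk.getVert_zero]; exact hij)
        omega
      · exfalso
        rw [if_neg hi0, if_pos hj0] at hij
        have := hinj (a + i.val - 1) (by omega) 0 (Nat.zero_le _)
          (by rw [Walk.getVert_zero]; exact hij)
        omega
      · rw [if_neg hi0, if_neg hj0] at hij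
        have := hinj (a + i.val - 1) (by omega) (a + j.val - 1) (by omega) hij
        omega
    · intro i
      have hvi := ZMod.val_lt i
      have hsucc : (i + 1).val = (i.val + 1) % m := by
        rw [ZMod.val_add, ZMod.val_one_eq_one_mod,
          Nat.mod_eq_of_lt (show 1 < m by omega)]
      show F.Adj (if i.val = 0 then u else p.getVert (a + i.val - 1))
        (if (i + 1).val = 0 then u else p.getVert (a + (i + 1).val - 1))
      by_cases hlast : i.val = m - 1
      · -- wrap-around edge: getVert b ~ u
        have h1 : (i + 1).val = 0 := by
          rw [hsucc, hlast, Nat.sub_add_cancel (by omega), Nat.mod_self]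
        have hi0 : i.val ≠ 0 := by omega
        rw [if_neg hi0, if_pos h1]
        have : a + i.val - 1 = b := by omega
        rw [this]
        exact hadj2.symm
      · have h1 : (i + 1).val = i.val + 1 := by
          rw [hsucc, Nat.mod_eq_of_lt (by omega)]
        by_cases hi0 : i.val = 0
        · -- first edge: u ~ getVert a
          rw [if_pos hi0, if_neg (by omega : ¬(i + 1).val = 0)]
          have : a + (i + 1).val - 1 = a := by omega
          rw [this]
          exact hadj1
        · -- path edge
          rw [if_neg hi0, if_neg (by omega : ¬(i + 1).val = 0)]
          have harith : a + (i + 1).val - 1 = (a + i.val - 1) + 1 := by omega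
          rw [harith]
          exact p.adj_getVert_succ (by omega)
end

section
/- Let l ≥ 2 and s, t ≥ 1 be integers, and let G = K_{s,t} be an edge-colored complete bipartite graph with vertex set V(G) ⊆ [n] (each edge e colored by z_e ∈ [n] \ e). If G contains a strongly rainbow colored cycle of length congruent to 2 modulo 2l−2, then G contains a strongly rainbow colored cycle of length exactly 2l. -/
/-- The edge set of the complete bipartite graph with parts `A` and `B`. -/
def completeBipartiteEdges (A B : Finset ℕ) : Finset (Finset ℕ) :=
  (A ×ˢ B).image fun p => ({p.1, p.2} : Finset ℕ)

/-- An edge-colored graph `G` (with coloring `χ`) contains a strongly rainbow colored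
cycle of length `m`. -/
def HasStronglyRainbowCycle (m : ℕ) (G : Finset (Finset ℕ)) (χ : Finset ℕ → ℕ) : Prop :=
  ∃ x : ZMod m → ℕ, Function.Injective x ∧
    (∀ i, ({x i, x (i + 1)} : Finset ℕ) ∈ G) ∧
    (Function.Injective fun i => χ ({x i, x (i + 1)} : Finset ℕ)) ∧
    (∀ i j, χ ({x i, x (i + 1)} : Finset ℕ) ≠ x j)

lemma pair_mem_cbe {A B : Finset ℕ} {u v : ℕ} (huv : u ≠ v) :
    ({u, v} : Finset ℕ) ∈ completeBipartiteEdges A B ↔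
      (u ∈ A ∧ v ∈ B) ∨ (v ∈ A ∧ u ∈ B) := by
  unfold completeBipartiteEdges
  simp only [Finset.mem_image, Finset.mem_product, Prod.exists]
  constructor
  · rintro ⟨a, b, ⟨ha, hb⟩, hab⟩
    have hu : u ∈ ({a, b} : Finset ℕ) := by rw [hab]; simp
    have hv : v ∈ ({a, b} : Finset ℕ) := by rw [hab]; simp
    simp only [Finset.mem_insert, Finset.mem_singleton] at hu hv
    rcases hu with hu | hu <;> rcases hv with hv | hv
    · exact absurd (hu.trans hv.symm) huv
    · exact Or.inl ⟨hu ▸ ha, hv ▸ hb⟩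
    · exact Or.inr ⟨hv ▸ ha, hu ▸ hb⟩
    · exact absurd (hu.trans hv.symm) huv
  · rintro (⟨hu, hv⟩ | ⟨hv, hu⟩)
    · exact ⟨u, v, ⟨hu, hv⟩, rfl⟩
    · exact ⟨v, u, ⟨hv, hu⟩, (Finset.pair_comm u v).symm⟩

lemma srcycle_reduce (l : ℕ) (hl : 2 ≤ l) (A B : Finset ℕ) (hAB : Disjoint A B)
    (G : Finset (Finset ℕ)) (hG : G = completeBipartiteEdges A B)
    (χ : Finset ℕ → ℕ) (hχ : ∀ e ∈ G, χ e ∉ e) :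
    ∀ m : ℕ, 3 ≤ m → m % (2 * l - 2) = 2 % (2 * l - 2) →
      HasStronglyRainbowCycle m G χ → HasStronglyRainbowCycle (2 * l) G χ := by
  intro m
  induction m using Nat.strong_induction_on with
  | _ m ih =>
  intro hm3 hmod hSR
  by_cases hm2l : m = 2 * l
  · exact hm2l ▸ hSR
  -- arithmetic: m ≥ 4l - 2
  have hge : 4 * l - 2 ≤ m := by
    rcases eq_or_lt_of_le hl with h2 | h3
    · have hdd : 2 * l - 2 = 2 := by omega
      rw [hdd] at hmod
      omega
    · have h2m : 2 % (2 * l - 2) = 2 := Nat.mod_eq_of_lt (by omega)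
      rw [h2m] at hmod
      have hdm := Nat.div_add_mod m (2 * l - 2)
      rw [hmod] at hdm
      have hq2 : 2 ≤ m / (2 * l - 2) := by
        by_contra hq
        push_neg at hq
        rcases Nat.le_one_iff_eq_zero_or_eq_one.mp (by omega : m / (2 * l - 2) ≤ 1) with h | h <;>
          rw [h] at hdm <;> omega
      have hmul := Nat.mul_le_mul_left (2 * l - 2) hq2
      generalize hP : (2 * l - 2) * (m / (2 * l - 2)) = P at hdm hmul
      omega
  obtain ⟨x, hxinj, hedge, hcinj, hcv⟩ := hSR
  haveI : NeZero m := ⟨by omega⟩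
  haveI : Fact (1 < m) := ⟨by omega⟩
  haveI : NeZero (2 * l) := ⟨by omega⟩
  haveI : Fact (1 < 2 * l) := ⟨by omega⟩
  obtain ⟨a, ha⟩ : ∃ a, a = 2 * l - 1 := ⟨_, rfl⟩
  -- cast helpers
  have hvlt : ∀ b : ℕ, b < m → ((b : ZMod m)).val = b := fun b hb => ZMod.val_cast_of_lt hb
  have hcastinj : ∀ b b' : ℕ, b < m → b' < m → (b : ZMod m) = (b' : ZMod m) → b = b' := by
    intro b b' hb hb' h
    rw [← hvlt b hb, ← hvlt b' hb', h]
  have hxinj' : ∀ b b' : ℕ, b < m → b' < m → x b = x b' → b = b' :=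
    fun b b' hb hb' h => hcastinj b b' hb hb' (hxinj h)
  have hedge' : ∀ k : ℕ, ({x ↑k, x ↑(k + 1)} : Finset ℕ) ∈ G := by
    intro k
    have h := hedge (k : ZMod m)
    have hc : ((k : ZMod m) + 1) = ((k + 1 : ℕ) : ZMod m) := by push_cast; ring
    rwa [hc] at h
  have hcinj' : ∀ b b' : ℕ, b < m → b' < m →
      χ ({x ↑b, x ↑(b + 1)} : Finset ℕ) = χ ({x ↑b', x ↑(b' + 1)} : Finset ℕ) → b = b' := by
    intro b b' hb hb' h
    have hca : ((b : ZMod m) + 1) = ((b + 1 : ℕ) : ZMod m) := by push_cast; ring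
    have hcb : ((b' : ZMod m) + 1) = ((b' + 1 : ℕ) : ZMod m) := by push_cast; ring
    refine hcastinj b b' hb hb' (hcinj ?_)
    show χ ({x ↑b, x (↑b + 1)} : Finset ℕ) = χ ({x ↑b', x (↑b' + 1)} : Finset ℕ)
    rw [hca, hcb]; exact h
  have hcv' : ∀ (b : ℕ) (j : ZMod m), χ ({x ↑b, x ↑(b + 1)} : Finset ℕ) ≠ x j := by
    intro b j h
    have hca : ((b : ZMod m) + 1) = ((b + 1 : ℕ) : ZMod m) := by push_cast; ring
    exact hcv ↑b j (by rw [hca]; exact h)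
  -- alternation between parts
  have hxadj : ∀ i : ZMod m, x i ≠ x (i + 1) := by
    intro i h
    have h1 : i = i + 1 := hxinj h
    exact one_ne_zero (left_eq_add.mp h1)
  have hpart : ∀ i : ZMod m, (x i ∈ A ∧ x (i + 1) ∈ B) ∨ (x (i + 1) ∈ A ∧ x i ∈ B) := by
    intro i
    have hmem := hedge i
    rw [hG] at hmem
    exact (pair_mem_cbe (hxadj i)).mp hmem
  have hdisj : ∀ y : ℕ, y ∈ A → y ∈ B → False :=
    fun y h1 h2 => Finset.disjoint_left.mp hAB h1 h2
  have halt : ∀ k : ℕ,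
      (Even k → ((x 0 ∈ A ∧ x ((k : ℕ) : ZMod m) ∈ A) ∨ (x 0 ∈ B ∧ x ((k : ℕ) : ZMod m) ∈ B))) ∧
      (¬Even k → ((x 0 ∈ A ∧ x ((k : ℕ) : ZMod m) ∈ B) ∨ (x 0 ∈ B ∧ x ((k : ℕ) : ZMod m) ∈ A))) := by
    intro k
    induction k with
    | zero =>
      refine ⟨fun _ => ?_, fun h => absurd Even.zero h⟩
      simp only [Nat.cast_zero]
      rcases hpart 0 with ⟨h1, _⟩ | ⟨_, h1⟩
      · exact Or.inl ⟨h1, h1⟩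
      · exact Or.inr ⟨h1, h1⟩
    | succ k ihk =>
      have hstep := hpart ((k : ℕ) : ZMod m)
      have hc : (((k : ℕ) : ZMod m) + 1) = (((k + 1 : ℕ)) : ZMod m) := by push_cast; ring
      rw [hc] at hstep
      have hpar : Even (k + 1) ↔ ¬Even k := Nat.even_add_one
      have d1 := hdisj (x ((k : ℕ) : ZMod m))
      have d2 := hdisj (x (((k + 1 : ℕ)) : ZMod m))
      have d0 := hdisj (x 0)
      constructor <;> intro h
      · have hk' := ihk.2 (hpar.mp h)
        rcases hk' with ⟨h1, h2⟩ | ⟨h1, h2⟩ <;> rcases hstep with ⟨h3, h4⟩ | ⟨h3, h4⟩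
        · exact absurd h2 (fun hh => d1 h3 hh)
        · exact Or.inl ⟨h1, h3⟩
        · exact Or.inr ⟨h1, h4⟩
        · exact absurd h4 (fun hh => d1 h2 hh)
      · have hek : Even k := by by_contra hk; exact h (hpar.mpr hk)
        have hk' := ihk.1 hek
        rcases hk' with ⟨h1, h2⟩ | ⟨h1, h2⟩ <;> rcases hstep with ⟨h3, h4⟩ | ⟨h3, h4⟩
        · exact Or.inl ⟨h1, h4⟩
        · exact absurd h4 (fun hh => d1 h2 hh)
        · exact absurd h2 (fun hh => d1 h3 hh)
        · exact Or.inr ⟨h1, h3⟩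
  -- the chord
  have hodd : ¬ Even a := by rintro ⟨r, hr⟩; omega
  have hopp := (halt a).2 hodd
  have hne0 : x 0 ≠ x ((a : ℕ) : ZMod m) := by
    intro h
    have h1 : ((0 : ℕ) : ZMod m) = ((a : ℕ) : ZMod m) := by
      rw [Nat.cast_zero]; exact hxinj h
    have := hcastinj 0 a (by omega) (by omega) h1
    omega
  have hchordG : ({x 0, x ((a : ℕ) : ZMod m)} : Finset ℕ) ∈ G := by
    rw [hG]
    rcases hopp with ⟨h1, h2⟩ | ⟨h1, h2⟩
    · exact (pair_mem_cbe hne0).mpr (Or.inl ⟨h1, h2⟩)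
    · exact (pair_mem_cbe hne0).mpr (Or.inr ⟨h2, h1⟩)
  obtain ⟨c, hcdef⟩ : ∃ c, c = χ ({x 0, x ((a : ℕ) : ZMod m)} : Finset ℕ) := ⟨_, rfl⟩
  have hcne : ¬(c = x 0 ∨ c = x ((a : ℕ) : ZMod m)) := by
    have h := hχ _ hchordG
    rw [← hcdef] at h
    simpa [Finset.mem_insert, Finset.mem_singleton] using h
  push_neg at hcne
  -- the short cycle D of length 2l
  have hval1 : (1 : ZMod (2 * l)).val = 1 := ZMod.val_one (2 * l)
  have hDdesc : ∀ i : ZMod (2 * l),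
      (i.val < a ∧ (i + 1).val = i.val + 1) ∨ (i.val = a ∧ (i + 1).val = 0) := by
    intro i
    have hlt := ZMod.val_lt i
    by_cases h : i.val < a
    · left
      refine ⟨h, ?_⟩
      rw [ZMod.val_add, hval1, Nat.mod_eq_of_lt (by omega)]
    · right
      have h1 : i.val = a := by omega
      refine ⟨h1, ?_⟩
      rw [ZMod.val_add, hval1, h1]
      have : a + 1 = 2 * l := by omega
      rw [this, Nat.mod_self]
  by_cases hDrain :
      (Function.Injective fun i : ZMod (2 * l) =>
        χ ({x ((i.val : ℕ) : ZMod m), x (((i + 1).val : ℕ) : ZMod m)} : Finset ℕ)) ∧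
      (∀ i j : ZMod (2 * l),
        χ ({x ((i.val : ℕ) : ZMod m), x (((i + 1).val : ℕ) : ZMod m)} : Finset ℕ) ≠
          x ((j.val : ℕ) : ZMod m))
  · refine ⟨fun i => x ((i.val : ℕ) : ZMod m), ?_, ?_, hDrain.1, hDrain.2⟩
    · intro i j h
      have hb := hxinj' i.val j.val (by have := ZMod.val_lt i; omega)
        (by have := ZMod.val_lt j; omega) h
      exact ZMod.val_injective _ hb
    · intro i
      show ({x ((i.val : ℕ) : ZMod m), x (((i + 1).val : ℕ) : ZMod m)} : Finset ℕ) ∈ G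
      rcases hDdesc i with ⟨h1, h2⟩ | ⟨h1, h2⟩
      · rw [h2]; exact hedge' i.val
      · rw [h1, h2, Nat.cast_zero, Finset.pair_comm]; exact hchordG
  rw [not_and_or] at hDrain
  have hDc : (∃ k : ℕ, k < a ∧ c = χ ({x ↑k, x ↑(k + 1)} : Finset ℕ)) ∨
      (∃ k : ℕ, k < 2 * l ∧ c = x ((k : ℕ) : ZMod m)) := by
    rcases hDrain with hP | hQ
    · rw [Function.not_injective_iff] at hP
      obtain ⟨i, j, hij, hne⟩ := hP
      rcases hDdesc i with ⟨hi1, hi2⟩ | ⟨hi1, hi2⟩ <;>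
        rcases hDdesc j with ⟨hj1, hj2⟩ | ⟨hj1, hj2⟩
      · rw [hi2, hj2] at hij
        have := hcinj' i.val j.val (by omega) (by omega) hij
        exact (hne (ZMod.val_injective _ this)).elim
      · rw [hi2, hj1, hj2, Nat.cast_zero,
          Finset.pair_comm (x ((a : ℕ) : ZMod m)) (x 0), ← hcdef] at hij
        exact Or.inl ⟨i.val, hi1, hij.symm⟩
      · rw [hj2, hi1, hi2, Nat.cast_zero,
          Finset.pair_comm (x ((a : ℕ) : ZMod m)) (x 0), ← hcdef] at hij
        exact Or.inl ⟨j.val, hj1, hij⟩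
      · exact (hne (ZMod.val_injective _ (hi1.trans hj1.symm))).elim
    · push_neg at hQ
      obtain ⟨i, j, hij⟩ := hQ
      rcases hDdesc i with ⟨hi1, hi2⟩ | ⟨hi1, hi2⟩
      · rw [hi2] at hij
        exact (hcv' i.val _ hij).elim
      · rw [hi1, hi2, Nat.cast_zero,
          Finset.pair_comm (x ((a : ℕ) : ZMod m)) (x 0), ← hcdef] at hij
        exact Or.inr ⟨j.val, ZMod.val_lt j, hij⟩
  -- the long cycle E of length m' = m - 2l + 2
  obtain ⟨m', hm'def⟩ : ∃ m', m' = m - 2 * l + 2 := ⟨_, rfl⟩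
  have hm'3 : 3 ≤ m' := by clear * - hge hl hm2l hm3 ha hm'def; omega
  have hm'lt : m' < m := by omega
  have hm'mod : m' % (2 * l - 2) = 2 % (2 * l - 2) := by
    have hme : m = m' + (2 * l - 2) := by omega
    rw [hme, Nat.add_mod_right] at hmod
    exact hmod
  haveI : NeZero m' := ⟨by omega⟩
  haveI : Fact (1 < m') := ⟨by omega⟩
  have hval1' : (1 : ZMod m').val = 1 := ZMod.val_one m'
  have hwrapidx : a + (m' - 1) = m := by clear * - hge hl ha hm'def; omega
  have hEdesc : ∀ i : ZMod m',
      (i.val < m' - 1 ∧ (i + 1).val = i.val + 1) ∨ (i.val = m' - 1 ∧ (i + 1).val = 0) := by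
    intro i
    have hlt := ZMod.val_lt i
    by_cases h : i.val < m' - 1
    · left
      refine ⟨h, ?_⟩
      rw [ZMod.val_add, hval1', Nat.mod_eq_of_lt (by omega)]
    · right
      have h1 : i.val = m' - 1 := by omega
      refine ⟨h1, ?_⟩
      rw [ZMod.val_add, hval1', h1]
      have : m' - 1 + 1 = m' := by omega
      rw [this, Nat.mod_self]
  have hEinj : Function.Injective (fun i : ZMod m' => x ((a + i.val : ℕ) : ZMod m)) := by
    intro i j h
    have h1 := hxinj h
    have h2 : ((i.val : ℕ) : ZMod m) = ((j.val : ℕ) : ZMod m) := by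
      push_cast at h1
      exact add_left_cancel h1
    have h3 := hcastinj i.val j.val (by have := ZMod.val_lt i; omega)
      (by have := ZMod.val_lt j; omega) h2
    exact ZMod.val_injective _ h3
  have hEedge : ∀ i : ZMod m',
      ({x ((a + i.val : ℕ) : ZMod m), x ((a + (i + 1).val : ℕ) : ZMod m)} : Finset ℕ) ∈ G := by
    intro i
    rcases hEdesc i with ⟨h1, h2⟩ | ⟨h1, h2⟩
    · rw [h2, ← add_assoc]
      exact hedge' (a + i.val)
    · rw [h1, h2]
      simp only [Nat.add_zero]
      rw [hwrapidx, ZMod.natCast_self]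
      exact hchordG
  by_cases hErain :
      (Function.Injective fun i : ZMod m' =>
        χ ({x ((a + i.val : ℕ) : ZMod m), x ((a + (i + 1).val : ℕ) : ZMod m)} : Finset ℕ)) ∧
      (∀ i j : ZMod m',
        χ ({x ((a + i.val : ℕ) : ZMod m), x ((a + (i + 1).val : ℕ) : ZMod m)} : Finset ℕ) ≠
          x ((a + j.val : ℕ) : ZMod m))
  · exact ih m' hm'lt hm'3 hm'mod
      ⟨fun i => x ((a + i.val : ℕ) : ZMod m), hEinj, hEedge, hErain.1, hErain.2⟩
  rw [not_and_or] at hErain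
  have hEc : (∃ k : ℕ, a ≤ k ∧ k < m ∧ c = χ ({x ↑k, x ↑(k + 1)} : Finset ℕ)) ∨
      (∃ k : ℕ, a ≤ k ∧ k < m ∧ c = x ((k : ℕ) : ZMod m)) ∨ c = x 0 := by
    rcases hErain with hP | hQ
    · rw [Function.not_injective_iff] at hP
      obtain ⟨i, j, hij, hne⟩ := hP
      rcases hEdesc i with ⟨hi1, hi2⟩ | ⟨hi1, hi2⟩ <;>
        rcases hEdesc j with ⟨hj1, hj2⟩ | ⟨hj1, hj2⟩
      · rw [hi2, hj2, ← add_assoc, ← add_assoc] at hij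
        have := hcinj' (a + i.val) (a + j.val) (by omega) (by omega) hij
        have hvv : i.val = j.val := by omega
        exact (hne (ZMod.val_injective _ hvv)).elim
      · rw [hi2, ← add_assoc, hj1, hj2] at hij
        simp only [Nat.add_zero] at hij
        rw [hwrapidx, ZMod.natCast_self, ← hcdef] at hij
        exact Or.inl ⟨a + i.val, by omega, by omega, hij.symm⟩
      · rw [hj2, ← add_assoc, hi1, hi2] at hij
        simp only [Nat.add_zero] at hij
        rw [hwrapidx, ZMod.natCast_self, ← hcdef] at hij
        exact Or.inl ⟨a + j.val, by omega, by omega, hij⟩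
      · exact (hne (ZMod.val_injective _ (hi1.trans hj1.symm))).elim
    · push_neg at hQ
      obtain ⟨i, j, hij⟩ := hQ
      rcases hEdesc i with ⟨hi1, hi2⟩ | ⟨hi1, hi2⟩
      · rw [hi2, ← add_assoc] at hij
        exact (hcv' (a + i.val) _ hij).elim
      · rw [hi1, hi2] at hij
        simp only [Nat.add_zero] at hij
        rw [hwrapidx, ZMod.natCast_self, ← hcdef] at hij
        rcases hEdesc j with ⟨hj1, _⟩ | ⟨hj1, _⟩
        · exact Or.inr (Or.inl ⟨a + j.val, by omega, by omega, hij⟩)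
        · rw [hj1, hwrapidx, ZMod.natCast_self] at hij
          exact Or.inr (Or.inr hij)
  exfalso
  rcases hDc with ⟨k, hk, hc⟩ | ⟨k, hk, hc⟩
  · rcases hEc with ⟨k', hk1, hk2, hc'⟩ | ⟨k', hk1, hk2, hc'⟩ | hc'
    · have := hcinj' k k' (by omega) hk2 (hc.symm.trans hc')
      omega
    · exact hcv' k _ (hc.symm.trans hc')
    · exact hcv' k (0 : ZMod m) (hc.symm.trans hc')
  · rcases hEc with ⟨k', hk1, hk2, hc'⟩ | ⟨k', hk1, hk2, hc'⟩ | hc'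
    · exact hcv' k' _ (hc'.symm.trans hc)
    · have hkk := hxinj' k k' (by omega) hk2 (hc.symm.trans hc')
      have hka : k = a := by omega
      rw [hka] at hc
      exact hcne.2 hc
    · exact hcne.1 hc'

/-- If an edge-colored `K_{s,t}` with vertices in `[n]` contains a strongly rainbow
colored cycle of length `≡ 2 (mod 2l−2)`, then it contains a strongly rainbow colored
cycle of length exactly `2l`. -/
theorem strongly_rainbow_C2l_of_cycle_two_mod (l s t n : ℕ) (hl : 2 ≤ l)
    (hs : 1 ≤ s) (ht : 1 ≤ t)
    (A B : Finset ℕ) (hA : A ⊆ Finset.Icc 1 n) (hB : B ⊆ Finset.Icc 1 n)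
    (hAB : Disjoint A B) (hAc : A.card = s) (hBc : B.card = t)
    (G : Finset (Finset ℕ)) (hG : G = completeBipartiteEdges A B)
    (χ : Finset ℕ → ℕ) (hχ : ∀ e ∈ G, χ e ∈ Finset.Icc 1 n ∧ χ e ∉ e)
    (hcyc : ∃ m : ℕ, 3 ≤ m ∧ m % (2 * l - 2) = 2 % (2 * l - 2) ∧
      HasStronglyRainbowCycle m G χ) :
    HasStronglyRainbowCycle (2 * l) G χ := by
  obtain ⟨m, hm3, hmod, hSR⟩ := hcyc
  exact srcycle_reduce l hl A B hAB G hG χ (fun e he => (hχ e he).2) m hm3 hmod hSR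
end

section
/- For every integer c ≥ 2 and every integer p > c⁴, if G = K_{p,p} is a complete bipartite graph whose edges are colored (with colors from an arbitrary set) such that every color class is a matching, then G contains a rainbow colored copy of K_{c,c}, i.e., there exist c-element subsets X and Y of the two parts such that all c² edges between X and Y receive pairwise distinct colors. -/
/-- If `K_{p,p}` with `p > c⁴` is edge-colored so that every color class is a matching,
then it contains a rainbow colored `K_{c,c}`. -/
theorem rainbow_Kcc_of_matching_color_classes {γ : Type*}
    (c p : ℕ) (hc : 2 ≤ c) (hp : c ^ 4 < p)
    (A B : Finset ℕ) (hA : A.card = p) (hB : B.card = p) (hAB : Disjoint A B)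
    (χ : Finset ℕ → γ)
    (hmatch : ∀ x ∈ A, ∀ x' ∈ A, ∀ y ∈ B, ∀ y' ∈ B,
      χ ({x, y} : Finset ℕ) = χ ({x', y'} : Finset ℕ) →
        (x = x' ∧ y = y') ∨ (x ≠ x' ∧ y ≠ y')) :
    ∃ X ⊆ A, ∃ Y ⊆ B, X.card = c ∧ Y.card = c ∧
      ∀ x ∈ X, ∀ x' ∈ X, ∀ y ∈ Y, ∀ y' ∈ Y,
        χ ({x, y} : Finset ℕ) = χ ({x', y'} : Finset ℕ) → x = x' ∧ y = y' := by
  classical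
  have hcp : c ≤ p := le_of_lt (lt_of_le_of_lt (Nat.le_self_pow (by norm_num) c) hp)
  obtain ⟨X, hXA, hXc⟩ : ∃ X ⊆ A, X.card = c :=
    Finset.exists_subset_card_eq (by omega)
  have key : ∀ k, k ≤ c → ∃ Y ⊆ B, Y.card = k ∧
      ∀ x ∈ X, ∀ x' ∈ X, ∀ y ∈ Y, ∀ y' ∈ Y,
        χ ({x, y} : Finset ℕ) = χ ({x', y'} : Finset ℕ) → x = x' ∧ y = y' := by
    intro k
    induction k with
    | zero => exact fun _ => ⟨∅, by simp, by simp, by simp⟩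
    | succ k ih =>
      intro hk
      obtain ⟨Y, hYB, hYk, hrain⟩ := ih (Nat.le_of_succ_le hk)
      set bad : Finset ℕ :=
        B.filter (fun y => ∃ x ∈ X, ∃ x' ∈ X, ∃ y' ∈ Y,
          χ ({x, y} : Finset ℕ) = χ ({x', y'} : Finset ℕ)) with hbad
      have hbadsub : bad ⊆ (X ×ˢ X ×ˢ Y).biUnion (fun t =>
          B.filter (fun y => χ ({t.1, y} : Finset ℕ) = χ ({t.2.1, t.2.2} : Finset ℕ))) := by
        intro y hy
        rw [hbad, Finset.mem_filter] at hy
        obtain ⟨hyB, x, hx, x', hx', y', hy', heq⟩ := hy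
        refine Finset.mem_biUnion.mpr ⟨(x, x', y'), ?_, ?_⟩
        · simp [Finset.mem_product, hx, hx', hy']
        · exact Finset.mem_filter.mpr ⟨hyB, heq⟩
      have hbadcard : bad.card ≤ c * c * k := by
        calc bad.card ≤ ((X ×ˢ X ×ˢ Y).biUnion (fun t =>
              B.filter (fun y => χ ({t.1, y} : Finset ℕ) = χ ({t.2.1, t.2.2} : Finset ℕ)))).card :=
              Finset.card_le_card hbadsub
          _ ≤ ∑ t ∈ X ×ˢ X ×ˢ Y,
              (B.filter (fun y => χ ({t.1, y} : Finset ℕ) = χ ({t.2.1, t.2.2} : Finset ℕ))).card :=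
              Finset.card_biUnion_le
          _ ≤ ∑ _t ∈ X ×ˢ X ×ˢ Y, 1 := by
              apply Finset.sum_le_sum
              intro t ht
              apply Finset.card_le_one.mpr
              intro a ha b hb
              rw [Finset.mem_filter] at ha hb
              have htx : t.1 ∈ A := by
                rw [Finset.mem_product] at ht
                exact hXA ht.1
              have := hmatch t.1 htx t.1 htx a ha.1 b hb.1 (ha.2.trans hb.2.symm)
              tauto
          _ = c * c * k := by
              simp [Finset.card_product, hXc, hYk]; ring
      obtain ⟨y, hyB, hy⟩ : ∃ y ∈ B, y ∉ Y ∪ bad := by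
        by_contra h
        push_neg at h
        have hsub : B ⊆ Y ∪ bad := h
        have := Finset.card_le_card hsub
        have hu : (Y ∪ bad).card ≤ Y.card + bad.card := Finset.card_union_le _ _
        have hkc : k + 1 ≤ c := hk
        have h1 : 1 + c * c ≤ c * c * c := by nlinarith
        have h2 : (k + 1) * (1 + c * c) ≤ c * (c * c * c) := Nat.mul_le_mul hk h1
        have : k + c * c * k < c ^ 4 := by nlinarith
        omega
      have hyY : y ∉ Y := fun h => hy (Finset.mem_union_left _ h)
      have hybad : y ∉ bad := fun h => hy (Finset.mem_union_right _ h)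
      refine ⟨insert y Y, Finset.insert_subset hyB hYB,
        by rw [Finset.card_insert_of_notMem hyY, hYk], ?_⟩
      intro x hx x' hx' y₁ hy₁ y₂ hy₂ heq
      have hxA : x ∈ A := hXA hx
      have hx'A : x' ∈ A := hXA hx'
      rcases Finset.mem_insert.mp hy₁ with h1 | h1 <;>
        rcases Finset.mem_insert.mp hy₂ with h2 | h2
      · have hb1 : y₁ ∈ B := by rw [h1]; exact hyB
        have hb2 : y₂ ∈ B := by rw [h2]; exact hyB
        rcases hmatch x hxA x' hx'A y₁ hb1 y₂ hb2 heq with h | h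
        · exact h
        · exact absurd (h1.trans h2.symm) h.2
      · exfalso
        apply hybad
        subst h1
        exact Finset.mem_filter.mpr ⟨hyB, x, hx, x', hx', y₂, h2, heq⟩
      · exfalso
        apply hybad
        subst h2
        exact Finset.mem_filter.mpr ⟨hyB, x', hx', x, hx, y₁, h1, heq.symm⟩
      · exact hrain x hx x' hx' y₁ h1 y₂ h2 heq
  obtain ⟨Y, hYB, hYc, hrain⟩ := key c le_rfl
  exact ⟨X, hXA, Y, hYB, hXc, hYc, hrain⟩
end
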